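/- arXiv:1202.3312 — 2 statements merged into one kernel-verified Lean document; each statement's English description precedes it below -/
import Mathlib

section
/- Let H be a Hopf algebra over a field k with antipode S, A a left H-comodule algebra, δ : H → k a character and σ ∈ H a group-like element. If (δ,σ) is a modular pair (δ(σ)=1) which is ^A H-in involution, i.e. σ⁻¹ S_δ²(a₍₋₁₎) σ ⊗ a₍₀₎ = a₍₋₁₎ ⊗ a₍₀₎ for all a ∈ A, then the one-dimensional module-comodule ^σk_δ is an ^A H-SAYD module. -/
open TensorProduct LinearMap

noncomputable section
namespace HCN

variable (k : Type) [Field k]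

section Shortcuts
variable (X Y Z W : Type) [AddCommGroup X] [Module k X] [AddCommGroup Y] [Module k Y]
  [AddCommGroup Z] [Module k Z] [AddCommGroup W] [Module k W]
abbrev cmm : X ⊗[k] Y →ₗ[k] Y ⊗[k] X := (TensorProduct.comm k X Y).toLinearMap
abbrev asc : (X ⊗[k] Y) ⊗[k] Z →ₗ[k] X ⊗[k] (Y ⊗[k] Z) := (TensorProduct.assoc k X Y Z).toLinearMap
abbrev ascs : X ⊗[k] (Y ⊗[k] Z) →ₗ[k] (X ⊗[k] Y) ⊗[k] Z := (TensorProduct.assoc k X Y Z).symm.toLinearMap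
abbrev mid4 : (X ⊗[k] Y) ⊗[k] (Z ⊗[k] W) →ₗ[k] (X ⊗[k] Z) ⊗[k] (Y ⊗[k] W) :=
  (TensorProduct.tensorTensorTensorComm k X Y Z W).toLinearMap
end Shortcuts

section Mul
variable (H : Type) [AddCommGroup H] [Module k H]
def opMul (μ : H ⊗[k] H →ₗ[k] H) : H ⊗[k] H →ₗ[k] H := μ ∘ₗ cmm k H H
def lmulBy (μ : H ⊗[k] H →ₗ[k] H) (h : H) : H →ₗ[k] H := μ ∘ₗ TensorProduct.mk k H H h
def rmulBy (μ : H ⊗[k] H →ₗ[k] H) (h : H) : H →ₗ[k] H := μ ∘ₗ (TensorProduct.mk k H H).flip h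
variable {H}
variable {V W : Type} [AddCommGroup V] [Module k V] [AddCommGroup W] [Module k W]
def diagL (μ : H ⊗[k] H →ₗ[k] H) (ρV : V →ₗ[k] H ⊗[k] V) (ρW : W →ₗ[k] H ⊗[k] W) :
    (V ⊗[k] W) →ₗ[k] H ⊗[k] (V ⊗[k] W) :=
  (μ.rTensor (V ⊗[k] W)) ∘ₗ mid4 k H V H W ∘ₗ (TensorProduct.map ρV ρW)
def diagR (μ : H ⊗[k] H →ₗ[k] H) (ρV : V →ₗ[k] V ⊗[k] H) (ρW : W →ₗ[k] W ⊗[k] H) :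
    (V ⊗[k] W) →ₗ[k] (V ⊗[k] W) ⊗[k] H :=
  (μ.lTensor (V ⊗[k] W)) ∘ₗ mid4 k V H W H ∘ₗ (TensorProduct.map ρV ρW)
end Mul

section TpowSec
variable (A : Type) [AddCommGroup A] [Module k A]
def Tpow : ℕ → ModuleCat k
  | 0 => ModuleCat.of k k
  | n+1 => ModuleCat.of k (A ⊗[k] (Tpow n : Type))

/-- the linear equivalence extracting the *last* tensor factor of `Tpow k A (n+1)`. -/
def epow : ∀ n : ℕ, (Tpow k A (n+1) : Type) ≃ₗ[k] (Tpow k A n : Type) ⊗[k] A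
  | 0 => TensorProduct.comm k A k
  | n+1 => (LinearEquiv.lTensor A (epow n)).trans
      (TensorProduct.assoc k A (Tpow k A n : Type) A).symm
end TpowSec

section TrivCoact
variable (H : Type) [Ring H] [Algebra k H]
variable (M : Type) [AddCommGroup M] [Module k M]
/-- the trivial left coaction `m ↦ 1 ⊗ m`. -/
def trivL : M →ₗ[k] H ⊗[k] M := TensorProduct.mk k H M 1
/-- the trivial right coaction `m ↦ m ⊗ 1`. -/
def trivR : M →ₗ[k] M ⊗[k] H := (TensorProduct.mk k M H).flip 1
/-- the trivial right action `m ⊗ h ↦ ε(h) m` associated to a counit map `ε`. -/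
def trivAct (ε : H →ₗ[k] k) : M ⊗[k] H →ₗ[k] M :=
  (TensorProduct.rid k M).toLinearMap ∘ₗ (ε.lTensor M)
end TrivCoact

section TpowCoact
variable {H : Type} [Ring H] [Algebra k H]
variable {A : Type} [AddCommGroup A] [Module k A]

/-- the diagonal left coaction on `Tpow k A n` induced by a left coaction on `A`
(with respect to a multiplication map `μ` on `H`). -/
def TpowρL (μ : H ⊗[k] H →ₗ[k] H) (ρA : A →ₗ[k] H ⊗[k] A) :
    ∀ n : ℕ, (Tpow k A n : Type) →ₗ[k] H ⊗[k] (Tpow k A n : Type)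
  | 0 => trivL k H k
  | n+1 => diagL k μ ρA (TpowρL μ ρA n)

/-- the diagonal right coaction on `Tpow k A n` induced by a right coaction on `A`. -/
def TpowρR (μ : H ⊗[k] H →ₗ[k] H) (ρA : A →ₗ[k] A ⊗[k] H) :
    ∀ n : ℕ, (Tpow k A n : Type) →ₗ[k] (Tpow k A n : Type) ⊗[k] H
  | 0 => trivR k H k
  | n+1 => diagR k μ ρA (TpowρR μ ρA n)

end TpowCoact

section TwistSec
variable {H M : Type} [AddCommGroup H] [Module k H] [AddCommGroup M] [Module k M]

/-- the anti-Yetter--Drinfeld twist map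
`h ⊗ (g ⊗ m) ↦ S(h⁽³⁾) g h⁽¹⁾ ⊗ m · h⁽²⁾`, expressed diagrammatically in terms of a
multiplication `μ`, a comultiplication `Δ` and an antipode `S` of `H` and a right action
`act` of `H` on `M`. -/
def Twist (μ : H ⊗[k] H →ₗ[k] H) (Δ : H →ₗ[k] H ⊗[k] H) (S : H →ₗ[k] H)
    (act : M ⊗[k] H →ₗ[k] M) : H ⊗[k] (H ⊗[k] M) →ₗ[k] H ⊗[k] M :=
  letI Δ₂ : H →ₗ[k] H ⊗[k] (H ⊗[k] H) := (Δ.lTensor H) ∘ₗ Δ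
  letI actc : H ⊗[k] M →ₗ[k] M := act ∘ₗ cmm k H M
  letI sm : H ⊗[k] H →ₗ[k] H := opMul k H μ
  letI u : (H ⊗[k] H) ⊗[k] M →ₗ[k] H ⊗[k] M :=
    (S.rTensor M) ∘ₗ (actc.lTensor H) ∘ₗ asc k H H M ∘ₗ ((cmm k H H).rTensor M)
  (sm.rTensor M) ∘ₗ ascs k H H M ∘ₗ (u.lTensor H) ∘ₗ
    (sm.rTensor ((H ⊗[k] H) ⊗[k] M)) ∘ₗ mid4 k H (H ⊗[k] H) H M ∘ₗ (Δ₂.rTensor (H ⊗[k] M))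

/-- the right-coaction version of the anti-Yetter--Drinfeld twist map:
`(m ⊗ g) ⊗ h ↦ m · h⁽²⁾ ⊗ S(h⁽³⁾) g h⁽¹⁾`. -/
def TwistR (μ : H ⊗[k] H →ₗ[k] H) (Δ : H →ₗ[k] H ⊗[k] H) (S : H →ₗ[k] H)
    (act : M ⊗[k] H →ₗ[k] M) : (M ⊗[k] H) ⊗[k] H →ₗ[k] M ⊗[k] H :=
  cmm k H M ∘ₗ Twist k μ Δ S act ∘ₗ ((cmm k M H).lTensor H) ∘ₗ cmm k (M ⊗[k] H) H

end TwistSec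

section ComodLaws
variable {H : Type} [Ring H] [Bialgebra k H]
variable {V : Type} [AddCommGroup V] [Module k V]

/-- coassociativity of a left `H`-coaction. -/
def IsCoassocL (ρ : V →ₗ[k] H ⊗[k] V) : Prop :=
  ρ.lTensor H ∘ₗ ρ = asc k H H V ∘ₗ ((Coalgebra.comul (R := k) (A := H)).rTensor V) ∘ₗ ρ

/-- counitality of a left `H`-coaction. -/
def IsCounitalL (ρ : V →ₗ[k] H ⊗[k] V) : Prop :=
  (TensorProduct.lid k V).toLinearMap ∘ₗ ((Coalgebra.counit (R := k) (A := H)).rTensor V) ∘ₗ ρ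
    = LinearMap.id

/-- coassociativity of a right `H`-coaction. -/
def IsCoassocR (ρ : V →ₗ[k] V ⊗[k] H) : Prop :=
  ρ.rTensor H ∘ₗ ρ = ascs k V H H ∘ₗ ((Coalgebra.comul (R := k) (A := H)).lTensor V) ∘ₗ ρ

/-- counitality of a right `H`-coaction. -/
def IsCounitalR (ρ : V →ₗ[k] V ⊗[k] H) : Prop :=
  (TensorProduct.rid k V).toLinearMap ∘ₗ ((Coalgebra.counit (R := k) (A := H)).lTensor V) ∘ₗ ρ
    = LinearMap.id

end ComodLaws

section ComodAlg
variable {H : Type} [Ring H] [Bialgebra k H]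

/-- `A` is a left `H`-comodule algebra via the coaction `ρ`:  `ρ` is a counital coassociative
coaction which is moreover a morphism of unital algebras. -/
def IsComodAlgL {A : Type} [Ring A] [Algebra k A] (ρ : A →ₗ[k] H ⊗[k] A) : Prop :=
  IsCoassocL k ρ ∧ IsCounitalL k ρ ∧ ρ 1 = 1 ∧ ∀ a b : A, ρ (a * b) = ρ a * ρ b

/-- `A` is a right `H`-comodule algebra via the coaction `ρ`. -/
def IsComodAlgR {A : Type} [Ring A] [Algebra k A] (ρ : A →ₗ[k] A ⊗[k] H) : Prop :=
  IsCoassocR k ρ ∧ IsCounitalR k ρ ∧ ρ 1 = 1 ∧ ∀ a b : A, ρ (a * b) = ρ a * ρ b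

/-- `C` is a right `H`-comodule coalgebra via the coaction `ρ`:  `ρ` is a counital
coassociative coaction which is moreover a morphism of coalgebras, i.e.
`c₍₀₎⁽¹⁾ ⊗ c₍₀₎⁽²⁾ ⊗ c₍₁₎ = c⁽¹⁾₍₀₎ ⊗ c⁽²⁾₍₀₎ ⊗ c⁽¹⁾₍₁₎c⁽²⁾₍₁₎` and `ε(c₍₀₎)c₍₁₎ = ε(c)1`. -/
def IsComodCoalgR {C : Type} [AddCommGroup C] [Module k C] [Coalgebra k C]
    (ρ : C →ₗ[k] C ⊗[k] H) : Prop :=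
  IsCoassocR k ρ ∧ IsCounitalR k ρ
  ∧ ((Coalgebra.comul (R := k) (A := C)).rTensor H) ∘ₗ ρ
      = ((LinearMap.mul' k H).lTensor (C ⊗[k] C)) ∘ₗ mid4 k C H C H
          ∘ₗ (TensorProduct.map ρ ρ) ∘ₗ (Coalgebra.comul (R := k) (A := C))
  ∧ (TensorProduct.lid k H).toLinearMap ∘ₗ ((Coalgebra.counit (R := k) (A := C)).rTensor H) ∘ₗ ρ
      = (Algebra.linearMap k H) ∘ₗ (Coalgebra.counit (R := k) (A := C))

end ComodAlg

section Actions
variable {H : Type} [Ring H] [Algebra k H]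
variable {M : Type} [AddCommGroup M] [Module k M]

/-- `act` is a unital associative right action of the algebra `H` on `M`. -/
def IsRAct (act : M ⊗[k] H →ₗ[k] M) : Prop :=
  (∀ m : M, act (m ⊗ₜ[k] 1) = m) ∧
    ∀ (m : M) (g h : H), act (act (m ⊗ₜ[k] g) ⊗ₜ[k] h) = act (m ⊗ₜ[k] (g * h))

/-- `act` is a unital associative right action of `(H, μ, e)` on `M` where the
multiplication `μ` and unit `e` are given explicitly. -/
def IsRActμ (μ : H ⊗[k] H →ₗ[k] H) (e : H) (act : M ⊗[k] H →ₗ[k] M) : Prop :=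
  (∀ m : M, act (m ⊗ₜ[k] e) = m) ∧
    ∀ (m : M) (g h : H), act (act (m ⊗ₜ[k] g) ⊗ₜ[k] h) = act (m ⊗ₜ[k] μ (g ⊗ₜ[k] h))

end Actions

section ModAlg
variable {H : Type} [Ring H] [Bialgebra k H]

/-- `β` is a left action of the bialgebra `H` on `A` making `A` a left `H`-module algebra. -/
def IsModuleAlgL {A : Type} [Ring A] [Algebra k A]
    (β : H ⊗[k] A →ₗ[k] A) : Prop :=
  (∀ a : A, β (1 ⊗ₜ[k] a) = a)
  ∧ (∀ (g h : H) (a : A), β (g ⊗ₜ[k] β (h ⊗ₜ[k] a)) = β ((g * h) ⊗ₜ[k] a))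
  ∧ (β ∘ₗ ((LinearMap.mul' k A).lTensor H)
      = (LinearMap.mul' k A) ∘ₗ (TensorProduct.map β β) ∘ₗ mid4 k H H A A
          ∘ₗ ((Coalgebra.comul (R := k) (A := H)).rTensor (A ⊗[k] A)))
  ∧ (∀ h : H, β (h ⊗ₜ[k] (1 : A)) = (Coalgebra.counit (R := k) (A := H) h) • (1 : A))

end ModAlg

section LeftSAYD
variable {H : Type} [Ring H] [HopfAlgebra k H]
variable {A M : Type} [AddCommGroup A] [Module k A] [AddCommGroup M] [Module k M]

/-- colinearity of `φ : V → M` with respect to left `H`-coactions. -/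
def IsColinL {V : Type} [AddCommGroup V] [Module k V]
    (ρV : V →ₗ[k] H ⊗[k] V) (ρM : M →ₗ[k] H ⊗[k] M) (φ : V →ₗ[k] M) : Prop :=
  ρM ∘ₗ φ = φ.lTensor H ∘ₗ ρV

/-- the `^A H`-anti-Yetter--Drinfeld condition for a colinear map `φ : A ⊗ W → M`:
`(φ(a₍₀₎ ⊗ w) · a₍₋₁₎)₍₋₁₎ ⊗ (φ(a₍₀₎ ⊗ w) · a₍₋₁₎)₍₀₎
  = S(a₍₋₁₎⁽³⁾) φ(a₍₀₎ ⊗ w)₍₋₁₎ a₍₋₁₎⁽¹⁾ ⊗ φ(a₍₀₎ ⊗ w)₍₀₎ · a₍₋₁₎⁽²⁾`. -/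
def AYDcondL {W : Type} [AddCommGroup W] [Module k W]
    (ρA : A →ₗ[k] H ⊗[k] A) (ρM : M →ₗ[k] H ⊗[k] M) (act : M ⊗[k] H →ₗ[k] M)
    (φ : (A ⊗[k] W) →ₗ[k] M) : Prop :=
  ρM ∘ₗ act ∘ₗ cmm k H M ∘ₗ (φ.lTensor H) ∘ₗ asc k H A W ∘ₗ (ρA.rTensor W)
  = Twist k (LinearMap.mul' k H) (Coalgebra.comul (R := k)) (HopfAlgebra.antipode (R := k)) act
      ∘ₗ ((ρM ∘ₗ φ).lTensor H) ∘ₗ asc k H A W ∘ₗ (ρA.rTensor W)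

/-- the stability condition for a map `φ : V → M`:  `φ(v₍₀₎) · v₍₋₁₎ = φ(v)`. -/
def StabCondL {V : Type} [AddCommGroup V] [Module k V]
    (ρV : V →ₗ[k] H ⊗[k] V) (act : M ⊗[k] H →ₗ[k] M) (φ : V →ₗ[k] M) : Prop :=
  act ∘ₗ cmm k H M ∘ₗ (φ.lTensor H) ∘ₗ ρV = φ

/-- `M` (a module and comodule over `H`) is an `^A H`-SAYD module for the left `H`-comodule
(algebra) `A`:  every `H`-colinear map `φ : A^{⊗(n+1)} → M` (with respect to the diagonal
coaction) satisfies the `^A H`-AYD and stability conditions. -/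
def IsAHSAYDL (ρA : A →ₗ[k] H ⊗[k] A) (ρM : M →ₗ[k] H ⊗[k] M)
    (act : M ⊗[k] H →ₗ[k] M) : Prop :=
  ∀ n : ℕ, ∀ φ : (A ⊗[k] (Tpow k A n : Type)) →ₗ[k] M,
    IsColinL k (TpowρL k (LinearMap.mul' k H) ρA (n + 1)) ρM φ →
      AYDcondL k ρA ρM act φ ∧ StabCondL k (TpowρL k (LinearMap.mul' k H) ρA (n + 1)) act φ

/-- the left-coaction rotation map on `Tpow k A (n+1)`:
`a₀ ⊗ ⋯ ⊗ aₙ ↦ aₙ₍₋₁₎ ⊗ (aₙ₍₀₎ ⊗ a₀ ⊗ ⋯ ⊗ aₙ₋₁)`. -/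
def rotρL (ρA : A →ₗ[k] H ⊗[k] A) (n : ℕ) :
    (Tpow k A (n+1) : Type) →ₗ[k] H ⊗[k] (Tpow k A (n+1) : Type) :=
  asc k H A (Tpow k A n : Type) ∘ₗ cmm k (Tpow k A n : Type) (H ⊗[k] A)
    ∘ₗ (ρA.lTensor (Tpow k A n : Type)) ∘ₗ (epow k A n).toLinearMap

/-- the cyclic operator `τₙ` on `Hom(A^{⊗(n+1)}, M)`:
`(τₙ f)(a₀ ⊗ ⋯ ⊗ aₙ) = f(aₙ₍₀₎ ⊗ a₀ ⊗ ⋯ ⊗ aₙ₋₁) · aₙ₍₋₁₎`. -/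
def tauL (ρA : A →ₗ[k] H ⊗[k] A) (act : M ⊗[k] H →ₗ[k] M) (n : ℕ)
    (φ : (Tpow k A (n+1) : Type) →ₗ[k] M) : (Tpow k A (n+1) : Type) →ₗ[k] M :=
  act ∘ₗ cmm k H M ∘ₗ (φ.lTensor H) ∘ₗ rotρL k ρA n

/-- `M` is an `^A H`-HCC (Hopf cyclic coefficients) for the left `H`-comodule algebra `A`:
the cyclic operator `τₙ` is well defined on the `H`-colinear maps `A^{⊗(n+1)} → M`
(so the whole cocyclic structure is well defined) and satisfies `τₙ^{n+1} = id`, making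
`Hom^H(A^{⊗(n+1)}, M)` a cocyclic module. -/
def IsAHHCCL (ρA : A →ₗ[k] H ⊗[k] A) (ρM : M →ₗ[k] H ⊗[k] M)
    (act : M ⊗[k] H →ₗ[k] M) : Prop :=
  ∀ n : ℕ, ∀ φ : (Tpow k A (n+1) : Type) →ₗ[k] M,
    IsColinL k (TpowρL k (LinearMap.mul' k H) ρA (n + 1)) ρM φ →
      IsColinL k (TpowρL k (LinearMap.mul' k H) ρA (n + 1)) ρM (tauL k ρA act n φ)
      ∧ (tauL k ρA act n)^[n+1] φ = φ

/-- `M` is a (right-left) stable anti-Yetter--Drinfeld module over `H`: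
`(m·h)₍₋₁₎ ⊗ (m·h)₍₀₎ = S(h⁽³⁾) m₍₋₁₎ h⁽¹⁾ ⊗ m₍₀₎ · h⁽²⁾` and `m₍₀₎ · m₍₋₁₎ = m`. -/
def IsSAYD (ρM : M →ₗ[k] H ⊗[k] M) (act : M ⊗[k] H →ₗ[k] M) : Prop :=
  (ρM ∘ₗ act
    = Twist k (LinearMap.mul' k H) (Coalgebra.comul (R := k)) (HopfAlgebra.antipode (R := k)) act
        ∘ₗ (ρM.lTensor H) ∘ₗ cmm k M H)
  ∧ act ∘ₗ cmm k H M ∘ₗ ρM = LinearMap.id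

end LeftSAYD
section Characters
variable {H : Type} [Ring H] [HopfAlgebra k H]

/-- `σ` is a group-like element of `H`. -/
def IsGrouplike (σ : H) : Prop :=
  Coalgebra.comul (R := k) σ = σ ⊗ₜ[k] σ ∧ Coalgebra.counit (R := k) σ = 1

/-- the `δ`-twisted antipode `S_δ(h) = δ(h⁽¹⁾) S(h⁽²⁾)` of a character `δ : H → k`. -/
def Sdelta (δ : H →ₐ[k] k) : H →ₗ[k] H :=
  (TensorProduct.lid k H).toLinearMap
    ∘ₗ (TensorProduct.map δ.toLinearMap (HopfAlgebra.antipode (R := k)))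
    ∘ₗ (Coalgebra.comul (R := k))

/-- the right action of `H` on `k` through a character `δ` : `x · h = δ(h) x`. -/
def actChar (δ : H →ₐ[k] k) : k ⊗[k] H →ₗ[k] k :=
  (TensorProduct.lid k k).toLinearMap ∘ₗ (δ.toLinearMap.lTensor k)

/-- the left coaction of `H` on `k` given by a (group-like) element `σ` : `x ↦ σ ⊗ x`. -/
def coactGrouplike (σ : H) : k →ₗ[k] H ⊗[k] k := TensorProduct.mk k H k σ

end Characters

section RightSAYD
/- The right-coaction versions, with the Hopf structure maps `μ`, `Δ`, `S` given explicitly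
(so that they can be applied to the bicrossed product Hopf algebra structure on `F ⊗ U`). -/
variable {H : Type} [Ring H] [Algebra k H]
variable {A M : Type} [AddCommGroup A] [Module k A] [AddCommGroup M] [Module k M]

/-- colinearity of `φ : V → M` with respect to right `H`-coactions. -/
def IsColinR {V : Type} [AddCommGroup V] [Module k V]
    (ρV : V →ₗ[k] V ⊗[k] H) (ρM : M →ₗ[k] M ⊗[k] H) (φ : V →ₗ[k] M) : Prop :=
  ρM ∘ₗ φ = φ.rTensor H ∘ₗ ρV

/-- the canonical map `A ⊗ W → (A ⊗ W) ⊗ H`, `a ⊗ w ↦ (a₍₀₎ ⊗ w) ⊗ a₍₁₎`,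
coacting on the first tensor factor only. -/
def coactFirstR {W : Type} [AddCommGroup W] [Module k W] (ρA : A →ₗ[k] A ⊗[k] H) :
    (A ⊗[k] W) →ₗ[k] (A ⊗[k] W) ⊗[k] H :=
  ascs k A W H ∘ₗ ((cmm k H W).lTensor A) ∘ₗ asc k A H W ∘ₗ (ρA.rTensor W)

/-- the right-coaction version of the `^A H`-anti-Yetter--Drinfeld condition for a
colinear map `φ : A ⊗ W → M`. -/
def AYDcondR {W : Type} [AddCommGroup W] [Module k W]
    (μ : H ⊗[k] H →ₗ[k] H) (Δ : H →ₗ[k] H ⊗[k] H) (S : H →ₗ[k] H)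
    (ρA : A →ₗ[k] A ⊗[k] H) (ρM : M →ₗ[k] M ⊗[k] H) (act : M ⊗[k] H →ₗ[k] M)
    (φ : (A ⊗[k] W) →ₗ[k] M) : Prop :=
  ρM ∘ₗ act ∘ₗ (φ.rTensor H) ∘ₗ coactFirstR k ρA
  = TwistR k μ Δ S act ∘ₗ ((ρM ∘ₗ φ).rTensor H) ∘ₗ coactFirstR k ρA

/-- the right-coaction stability condition : `φ(v₍₀₎) · v₍₁₎ = φ(v)`. -/
def StabCondR {V : Type} [AddCommGroup V] [Module k V]
    (ρV : V →ₗ[k] V ⊗[k] H) (act : M ⊗[k] H →ₗ[k] M) (φ : V →ₗ[k] M) : Prop :=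
  act ∘ₗ (φ.rTensor H) ∘ₗ ρV = φ

/-- `M` is an `^A H`-SAYD module for a *right* `H`-comodule (algebra) `A`, where the Hopf
structure maps `μ`, `Δ`, `S` of `H` are given explicitly. -/
def IsAHSAYDR (μ : H ⊗[k] H →ₗ[k] H) (Δ : H →ₗ[k] H ⊗[k] H) (S : H →ₗ[k] H)
    (ρA : A →ₗ[k] A ⊗[k] H) (ρM : M →ₗ[k] M ⊗[k] H) (act : M ⊗[k] H →ₗ[k] M) : Prop :=
  ∀ n : ℕ, ∀ φ : (A ⊗[k] (Tpow k A n : Type)) →ₗ[k] M,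
    IsColinR k (TpowρR k μ ρA (n + 1)) ρM φ →
      AYDcondR k μ Δ S ρA ρM act φ ∧ StabCondR k (TpowρR k μ ρA (n + 1)) act φ

end RightSAYD
section CotensorSide
variable {H : Type} [Ring H] [HopfAlgebra k H]
variable {C M : Type} [AddCommGroup C] [Module k C] [AddCommGroup M] [Module k M]

/-- the cotensor defect map `V ⊗ M → V ⊗ (H ⊗ M)`, whose kernel is the cotensor product
`V □_H M` of a right `H`-comodule `V` and a left `H`-comodule `M`. -/
def cotensorDefect {V : Type} [AddCommGroup V] [Module k V]
    (ρV : V →ₗ[k] V ⊗[k] H) (ρM : M →ₗ[k] H ⊗[k] M) :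
    V ⊗[k] M →ₗ[k] V ⊗[k] (H ⊗[k] M) :=
  asc k V H M ∘ₗ (ρV.rTensor M) - (ρM.lTensor V)

/-- the map `v ⊗ m ↦ v₍₀₎ ⊗ m · v₍₁₎`. -/
def stabMapC {V : Type} [AddCommGroup V] [Module k V]
    (ρV : V →ₗ[k] V ⊗[k] H) (act : M ⊗[k] H →ₗ[k] M) : V ⊗[k] M →ₗ[k] V ⊗[k] M :=
  ((act ∘ₗ cmm k H M).lTensor V) ∘ₗ asc k V H M ∘ₗ (ρV.rTensor M)

/-- the `H^C`-anti-Yetter--Drinfeld condition: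
`c₍₀₎ ⊗ (m·c₍₁₎)₍₋₁₎ ⊗ (m·c₍₁₎)₍₀₎ = c₍₀₎ ⊗ S(c₍₁₎⁽³⁾) m₍₋₁₎ c₍₁₎⁽¹⁾ ⊗ m₍₀₎ · c₍₁₎⁽²⁾`. -/
def AYDcondC (ρC : C →ₗ[k] C ⊗[k] H) (ρM : M →ₗ[k] H ⊗[k] M)
    (act : M ⊗[k] H →ₗ[k] M) : Prop :=
  ((ρM ∘ₗ act ∘ₗ cmm k H M).lTensor C) ∘ₗ asc k C H M ∘ₗ (ρC.rTensor M)
  = ((Twist k (LinearMap.mul' k H) (Coalgebra.comul (R := k))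
        (HopfAlgebra.antipode (R := k)) act ∘ₗ (ρM.lTensor H)).lTensor C)
      ∘ₗ asc k C H M ∘ₗ (ρC.rTensor M)

/-- `M` is an `H^C`-SAYD module for the right `H`-comodule (coalgebra) `C` :
the `H^C`-AYD condition holds, and the stability condition
`d̃₍₀₎ ⊗ m · d̃₍₁₎ = d̃ ⊗ m` holds on the cotensor product `C^{⊗(n+1)} □_H M`. -/
def IsHCSAYD (ρC : C →ₗ[k] C ⊗[k] H) (ρM : M →ₗ[k] H ⊗[k] M)
    (act : M ⊗[k] H →ₗ[k] M) : Prop :=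
  AYDcondC k ρC ρM act
  ∧ ∀ n : ℕ, ∀ x ∈ LinearMap.ker
      (cotensorDefect k (TpowρR k (LinearMap.mul' k H) ρC (n + 1)) ρM),
      stabMapC k (TpowρR k (LinearMap.mul' k H) ρC (n + 1)) act x = x

/-- the cyclic operator `τₙ` on `C^{⊗(n+1)} ⊗ M`:
`c₀ ⊗ ⋯ ⊗ cₙ ⊗ m ↦ c₁ ⊗ ⋯ ⊗ cₙ ⊗ c₀₍₀₎ ⊗ m · c₀₍₁₎`. -/
def tauC (ρC : C →ₗ[k] C ⊗[k] H) (act : M ⊗[k] H →ₗ[k] M) (n : ℕ) :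
    ((Tpow k C (n+1) : Type) ⊗[k] M) →ₗ[k] ((Tpow k C (n+1) : Type) ⊗[k] M) :=
  letI W : Type := (Tpow k C n : Type)
  (((epow k C n).symm.toLinearMap).rTensor M)
    ∘ₗ ((act ∘ₗ cmm k H M).lTensor (W ⊗[k] C))
    ∘ₗ asc k (W ⊗[k] C) H M
    ∘ₗ ((ascs k W C H).rTensor M)
    ∘ₗ ((cmm k (C ⊗[k] H) W).rTensor M)
    ∘ₗ ((ρC.rTensor W).rTensor M)

/-- `M` is an `H^C`-HCC (Hopf cyclic coefficients) for the right `H`-comodule coalgebra `C` :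
the cyclic operator `τₙ` is well defined on the cotensor product `C^{⊗(n+1)} □_H M`
(so the whole cocyclic structure is well defined) and satisfies `τₙ^{n+1} = id` on it,
making `C^{⊗(n+1)} □_H M` a cocyclic module. -/
def IsHCHCC (ρC : C →ₗ[k] C ⊗[k] H) (ρM : M →ₗ[k] H ⊗[k] M)
    (act : M ⊗[k] H →ₗ[k] M) : Prop :=
  ∀ n : ℕ, ∀ x ∈ LinearMap.ker
      (cotensorDefect k (TpowρR k (LinearMap.mul' k H) ρC (n + 1)) ρM),
    tauC k ρC act n x ∈ LinearMap.ker
      (cotensorDefect k (TpowρR k (LinearMap.mul' k H) ρC (n + 1)) ρM)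
    ∧ (tauC k ρC act n)^[n+1] x = x

end CotensorSide

section CommCocommCond
variable {H : Type} [AddCommGroup H] [Module k H]
variable {A C W : Type} [AddCommGroup A] [Module k A] [AddCommGroup C] [Module k C]
  [AddCommGroup W] [Module k W]

/-- auxiliary map `(x ⊗ y) ⊗ z ↦ (z * x) ⊗ y`. -/
def muL (μ : H ⊗[k] H →ₗ[k] H) : (H ⊗[k] H) ⊗[k] H →ₗ[k] H ⊗[k] H :=
  (μ.rTensor H) ∘ₗ ascs k H H H ∘ₗ cmm k (H ⊗[k] H) H

/-- auxiliary map `(x ⊗ y) ⊗ z ↦ (y * z) ⊗ x`. -/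
def muR (μ : H ⊗[k] H →ₗ[k] H) : (H ⊗[k] H) ⊗[k] H →ₗ[k] H ⊗[k] H :=
  cmm k H H ∘ₗ (μ.lTensor H) ∘ₗ asc k H H H

/-- auxiliary map `z ⊗ (x ⊗ y) ↦ (z * x) ⊗ y`. -/
def nuL (μ : H ⊗[k] H →ₗ[k] H) : H ⊗[k] (H ⊗[k] H) →ₗ[k] H ⊗[k] H :=
  (μ.rTensor H) ∘ₗ ascs k H H H

/-- auxiliary map `z ⊗ (x ⊗ y) ↦ (y * z) ⊗ x`. -/
def nuR (μ : H ⊗[k] H →ₗ[k] H) : H ⊗[k] (H ⊗[k] H) →ₗ[k] H ⊗[k] H :=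
  cmm k H H ∘ₗ (μ.lTensor H) ∘ₗ asc k H H H ∘ₗ cmm k H (H ⊗[k] H)

/-- `H` coacts *cocommutatively* on the pair `(A, W)` (`A` and `W` left `H`-comodules):
`w₍₋₁₎ a₍₋₁₎⁽¹⁾ ⊗ a₍₋₁₎⁽²⁾ ⊗ a₍₀₎ ⊗ w₍₀₎ = a₍₋₁₎⁽²⁾ w₍₋₁₎ ⊗ a₍₋₁₎⁽¹⁾ ⊗ a₍₀₎ ⊗ w₍₀₎`. -/
def CocommCondL (μ : H ⊗[k] H →ₗ[k] H) (Δ : H →ₗ[k] H ⊗[k] H)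
    (ρA : A →ₗ[k] H ⊗[k] A) (ρW : W →ₗ[k] H ⊗[k] W) : Prop :=
  letI base : A ⊗[k] W →ₗ[k] ((H ⊗[k] H) ⊗[k] H) ⊗[k] (A ⊗[k] W) :=
    mid4 k (H ⊗[k] H) A H W ∘ₗ (TensorProduct.map ((Δ.rTensor A) ∘ₗ ρA) ρW)
  ((muL k μ).rTensor (A ⊗[k] W)) ∘ₗ base = ((muR k μ).rTensor (A ⊗[k] W)) ∘ₗ base

/-- `H` coacts *cocommutatively* on the pair `(W, C)` (`W` and `C` right `H`-comodules):
`w₍₀₎ ⊗ c₍₀₎ ⊗ w₍₁₎ c₍₁₎⁽¹⁾ ⊗ c₍₁₎⁽²⁾ = w₍₀₎ ⊗ c₍₀₎ ⊗ c₍₁₎⁽²⁾ w₍₁₎ ⊗ c₍₁₎⁽¹⁾`. -/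
def CocommCondR (μ : H ⊗[k] H →ₗ[k] H) (Δ : H →ₗ[k] H ⊗[k] H)
    (ρW : W →ₗ[k] W ⊗[k] H) (ρC : C →ₗ[k] C ⊗[k] H) : Prop :=
  letI base : W ⊗[k] C →ₗ[k] (W ⊗[k] C) ⊗[k] (H ⊗[k] (H ⊗[k] H)) :=
    mid4 k W H C (H ⊗[k] H) ∘ₗ (TensorProduct.map ρW ((Δ.lTensor C) ∘ₗ ρC))
  ((nuL k μ).lTensor (W ⊗[k] C)) ∘ₗ base = ((nuR k μ).lTensor (W ⊗[k] C)) ∘ₗ base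

end CommCocommCond
section Bicross
variable (F U : Type) [Ring F] [HopfAlgebra k F] [Ring U] [HopfAlgebra k U]

/-- inclusion `F → F ⊗ U`, `f ↦ f ⊗ 1`. -/
def jF : F →ₗ[k] F ⊗[k] U := (TensorProduct.mk k F U).flip 1
/-- inclusion `U → F ⊗ U`, `u ↦ 1 ⊗ u`. -/
def jU : U →ₗ[k] F ⊗[k] U := TensorProduct.mk k F U 1

/-- the right coaction of `H = F ⋈ U` on `F`: `f ↦ f⁽¹⁾ ⊗ (f⁽²⁾ ⋈ 1)`. -/
def bcoactF : F →ₗ[k] F ⊗[k] (F ⊗[k] U) :=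
  ((jF k F U).lTensor F) ∘ₗ (Coalgebra.comul (R := k) (A := F))

variable {F U}
variable (α : U ⊗[k] F →ₗ[k] F) (ρU : U →ₗ[k] U ⊗[k] F)

/-- the multiplication of the bicrossed product `F ⋈ U`:
`(f ⋈ u)(g ⋈ v) = f (u⁽¹⁾ ▷ g) ⋈ u⁽²⁾ v`, where `▷` is the action `α`. -/
def bmul : (F ⊗[k] U) ⊗[k] (F ⊗[k] U) →ₗ[k] F ⊗[k] U :=
  letI lam : (F ⊗[k] U) ⊗[k] F →ₗ[k] F :=
    (LinearMap.mul' k F) ∘ₗ (α.lTensor F) ∘ₗ asc k F U F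
  (TensorProduct.map lam (LinearMap.mul' k U))
    ∘ₗ mid4 k (F ⊗[k] U) U F U
    ∘ₗ ((ascs k F U U).rTensor (F ⊗[k] U))
    ∘ₗ (((Coalgebra.comul (R := k) (A := U)).lTensor F).rTensor (F ⊗[k] U))

/-- the comultiplication of the bicrossed product `F ⋈ U`:
`Δ(f ⋈ u) = (f⁽¹⁾ ⋈ u⁽¹⁾₍₀₎) ⊗ (f⁽²⁾ u⁽¹⁾₍₁₎ ⋈ u⁽²⁾)`, where `u ↦ u₍₀₎ ⊗ u₍₁₎` is the
coaction `ρU` of `F` on `U`. -/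
def bcomul : (F ⊗[k] U) →ₗ[k] (F ⊗[k] U) ⊗[k] (F ⊗[k] U) :=
  letI w : F ⊗[k] (F ⊗[k] U) →ₗ[k] F ⊗[k] U :=
    ((opMul k F (LinearMap.mul' k F)).rTensor U) ∘ₗ ascs k F F U
  (w.lTensor (F ⊗[k] U))
    ∘ₗ asc k (F ⊗[k] U) F (F ⊗[k] U)
    ∘ₗ ((ascs k F U F).rTensor (F ⊗[k] U))
    ∘ₗ ((ρU.lTensor F).rTensor (F ⊗[k] U))
    ∘ₗ mid4 k F F U U
    ∘ₗ (TensorProduct.map (Coalgebra.comul (R := k) (A := F))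
          (Coalgebra.comul (R := k) (A := U)))

/-- the antipode of the bicrossed product `F ⋈ U`:
`S(f ⋈ u) = (1 ⋈ S_U(u₍₀₎)) · (S_F(f u₍₁₎) ⋈ 1)`. -/
def bS : (F ⊗[k] U) →ₗ[k] F ⊗[k] U :=
  bmul k α ∘ₗ (TensorProduct.map (jU k F U ∘ₗ (HopfAlgebra.antipode (R := k) (A := U)))
      (jF k F U ∘ₗ (HopfAlgebra.antipode (R := k) (A := F))
        ∘ₗ (opMul k F (LinearMap.mul' k F))))
    ∘ₗ asc k U F F
    ∘ₗ cmm k F (U ⊗[k] F)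
    ∘ₗ (ρU.lTensor F)

/-- the right coaction of `H = F ⋈ U` on `U`: `u ↦ u₍₀₎ ⊗ (u₍₁₎ ⋈ 1)`. -/
def bcoactU : U →ₗ[k] U ⊗[k] (F ⊗[k] U) :=
  ((jF k F U).lTensor U) ∘ₗ ρU

/-- `(F, U)` together with the action `α : U ⊗ F → F` and the coaction `ρU : U → U ⊗ F`
is a matched pair of Hopf algebras, so that the bicrossed product `F ⋈ U` (with
multiplication `bmul` and comultiplication `bcomul`) is a Hopf algebra:
`F` is a left `U`-module algebra, `U` is a right `F`-comodule coalgebra, and the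
Majid compatibility conditions hold. -/
def IsMatchedPair : Prop :=
  -- `α` is a left `U`-module structure on `F`
  (∀ f : F, α ((1 : U) ⊗ₜ[k] f) = f)
  ∧ (α ∘ₗ ((LinearMap.mul' k U).rTensor F) = α ∘ₗ (α.lTensor U) ∘ₗ asc k U U F)
  -- making `F` a `U`-module algebra
  ∧ (α ∘ₗ ((LinearMap.mul' k F).lTensor U)
      = (LinearMap.mul' k F) ∘ₗ (TensorProduct.map α α) ∘ₗ mid4 k U U F F
          ∘ₗ ((Coalgebra.comul (R := k) (A := U)).rTensor (F ⊗[k] F)))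
  ∧ (∀ u : U, α (u ⊗ₜ[k] (1 : F)) = (Coalgebra.counit (R := k) (A := U) u) • (1 : F))
  -- `ρU` is a right `F`-comodule structure on `U`
  ∧ IsCoassocR k ρU ∧ IsCounitalR k ρU
  -- making `U` an `F`-comodule coalgebra
  ∧ (((Coalgebra.comul (R := k) (A := U)).rTensor F) ∘ₗ ρU
      = ((LinearMap.mul' k F).lTensor (U ⊗[k] U)) ∘ₗ mid4 k U F U F
          ∘ₗ (TensorProduct.map ρU ρU) ∘ₗ (Coalgebra.comul (R := k) (A := U)))
  ∧ ((TensorProduct.lid k F).toLinearMap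
        ∘ₗ ((Coalgebra.counit (R := k) (A := U)).rTensor F) ∘ₗ ρU
      = (Algebra.linearMap k F) ∘ₗ (Coalgebra.counit (R := k) (A := U)))
  -- `ρU(1) = 1 ⊗ 1`
  ∧ (ρU 1 = (1 : U) ⊗ₜ[k] (1 : F))
  -- multiplicativity: `ρ(uv) = u⁽¹⁾₍₀₎ v₍₀₎ ⊗ u⁽¹⁾₍₁₎ (u⁽²⁾ ▷ v₍₁₎)`
  ∧ (ρU ∘ₗ (LinearMap.mul' k U)
      = letI ζ : (((U ⊗[k] F) ⊗[k] U) ⊗[k] F) →ₗ[k] U ⊗[k] F :=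
          (TensorProduct.map (LinearMap.mul' k U) (LinearMap.mul' k F))
            ∘ₗ asc k (U ⊗[k] U) F F
            ∘ₗ ((ascs k U U F ∘ₗ ((cmm k F U).lTensor U) ∘ₗ asc k U F U).rTensor F)
        ζ ∘ₗ (α.lTensor ((U ⊗[k] F) ⊗[k] U))
          ∘ₗ mid4 k (U ⊗[k] F) U U F
          ∘ₗ ((ρU.rTensor U).rTensor (U ⊗[k] F))
          ∘ₗ (TensorProduct.map (Coalgebra.comul (R := k) (A := U)) ρU))
  -- compatibility: `u⁽²⁾₍₀₎ ⊗ (u⁽¹⁾ ▷ f) u⁽²⁾₍₁₎ = u⁽¹⁾₍₀₎ ⊗ u⁽¹⁾₍₁₎ (u⁽²⁾ ▷ f)`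
  ∧ (((opMul k F (LinearMap.mul' k F)).lTensor U) ∘ₗ asc k U F F
        ∘ₗ (α.lTensor (U ⊗[k] F)) ∘ₗ asc k (U ⊗[k] F) U F
        ∘ₗ ((cmm k U (U ⊗[k] F)).rTensor F) ∘ₗ ((ρU.lTensor U).rTensor F)
        ∘ₗ ((Coalgebra.comul (R := k) (A := U)).rTensor F)
      = ((LinearMap.mul' k F).lTensor U) ∘ₗ asc k U F F
          ∘ₗ (α.lTensor (U ⊗[k] F)) ∘ₗ asc k (U ⊗[k] F) U F
          ∘ₗ ((ρU.rTensor U).rTensor F)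
          ∘ₗ ((Coalgebra.comul (R := k) (A := U)).rTensor F))
  -- compatibility: `Δ_F(u ▷ f) = (u⁽¹⁾₍₀₎ ▷ f⁽¹⁾) ⊗ u⁽¹⁾₍₁₎ (u⁽²⁾ ▷ f⁽²⁾)`
  ∧ ((Coalgebra.comul (R := k) (A := F)) ∘ₗ α
      = letI ξ : (U ⊗[k] F) ⊗[k] F →ₗ[k] F ⊗[k] F :=
          (α.rTensor F) ∘ₗ ascs k U F F ∘ₗ ((cmm k F F).lTensor U) ∘ₗ asc k U F F
        ((LinearMap.mul' k F).lTensor F) ∘ₗ asc k F F F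
          ∘ₗ (TensorProduct.map ξ α)
          ∘ₗ mid4 k (U ⊗[k] F) U F F
          ∘ₗ ((ρU.rTensor U).rTensor (F ⊗[k] F))
          ∘ₗ (TensorProduct.map (Coalgebra.comul (R := k) (A := U))
                (Coalgebra.comul (R := k) (A := F))))
  -- compatibility: `ε(u ▷ f) = ε(u) ε(f)`
  ∧ (∀ (u : U) (f : F),
      Coalgebra.counit (R := k) (α (u ⊗ₜ[k] f))
        = Coalgebra.counit (R := k) u * Coalgebra.counit (R := k) f)

end Bicross
section CrossedProduct
variable {H : Type} [Ring H] [Algebra k H]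
variable {A B : Type} [Ring A] [Algebra k A] [Ring B] [Algebra k B]

/-- the multiplication of the crossed product algebra `A ⋊ B` for a left `H`-module
algebra `A` (action `β`) and a left `H`-comodule algebra `B` (coaction `ρB`):
`(a ⋊ b)(a' ⋊ b') = a (b₍₋₁₎ · a') ⋊ b₍₀₎ b'`. -/
def crossMul (β : H ⊗[k] A →ₗ[k] A) (ρB : B →ₗ[k] H ⊗[k] B) :
    (A ⊗[k] B) ⊗[k] (A ⊗[k] B) →ₗ[k] A ⊗[k] B :=
  letI lam : (A ⊗[k] H) ⊗[k] A →ₗ[k] A :=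
    (LinearMap.mul' k A) ∘ₗ (β.lTensor A) ∘ₗ asc k A H A
  (TensorProduct.map lam (LinearMap.mul' k B))
    ∘ₗ mid4 k (A ⊗[k] H) B A B
    ∘ₗ ((ascs k A H B).rTensor (A ⊗[k] B))
    ∘ₗ ((ρB.lTensor A).rTensor (A ⊗[k] B))

end CrossedProduct

section SimplicialOps
variable {R : Type} [AddCommGroup R] [Module k R]

/-- the rotation `a₀ ⊗ ⋯ ⊗ aₙ ↦ aₙ ⊗ a₀ ⊗ ⋯ ⊗ aₙ₋₁` on `Tpow k R (n+1)`. -/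
def rot (n : ℕ) : (Tpow k R (n+1) : Type) →ₗ[k] (Tpow k R (n+1) : Type) :=
  cmm k (Tpow k R n : Type) R ∘ₗ (epow k R n).toLinearMap

/-- `merge μ n i` multiplies the `i`-th and `(i+1)`-st tensor factors of `Tpow k R (n+2)`
(for `0 ≤ i ≤ n`; values at out-of-range indices are junk). -/
def merge (μ : R ⊗[k] R →ₗ[k] R) :
    ∀ (n i : ℕ), (Tpow k R (n+2) : Type) →ₗ[k] (Tpow k R (n+1) : Type)
  | n, 0 => (μ.rTensor (Tpow k R n : Type)) ∘ₗ ascs k R R (Tpow k R n : Type)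
  | 0, _+1 => (μ.rTensor (Tpow k R 0 : Type)) ∘ₗ ascs k R R (Tpow k R 0 : Type)
  | n+1, i+1 => (merge μ n i).lTensor R

/-- `ins e n i` inserts the element `e` in position `i+1` of `Tpow k R (n+1)`
(for `0 ≤ i ≤ n`; values at out-of-range indices are junk). -/
def ins (e : R) : ∀ (n i : ℕ), (Tpow k R (n+1) : Type) →ₗ[k] (Tpow k R (n+2) : Type)
  | n, 0 => (TensorProduct.mk k R (Tpow k R n : Type) e).lTensor R
  | 0, _+1 => (TensorProduct.mk k R (Tpow k R 0 : Type) e).lTensor R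
  | n+1, i+1 => (ins e n i).lTensor R

/-- the `i`-th coface operator of the standard cocyclic module of an algebra `(R, μ)`
(on cochains `Hom(R^{⊗(n+1)}, V)`); `i = n+1` is the twisted last coface
`(δ_{n+1} f)(r₀ ⊗ ⋯ ⊗ r_{n+1}) = f(r_{n+1} r₀ ⊗ r₁ ⊗ ⋯ ⊗ rₙ)`. -/
def faceAlg {V : Type} [AddCommGroup V] [Module k V] (μ : R ⊗[k] R →ₗ[k] R) (n i : ℕ)
    (f : (Tpow k R (n+1) : Type) →ₗ[k] V) : (Tpow k R (n+2) : Type) →ₗ[k] V :=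
  if i = n+1 then f ∘ₗ merge k μ n 0 ∘ₗ rot k (n+1) else f ∘ₗ merge k μ n i

/-- the `i`-th codegeneracy operator of the standard cocyclic module of an algebra. -/
def degAlg {V : Type} [AddCommGroup V] [Module k V] (e : R) (n i : ℕ)
    (f : (Tpow k R (n+2) : Type) →ₗ[k] V) : (Tpow k R (n+1) : Type) →ₗ[k] V :=
  f ∘ₗ ins k e n i

/-- the cyclic operator of the standard cocyclic module of an algebra:
`(τₙ f)(r₀ ⊗ ⋯ ⊗ rₙ) = f(rₙ ⊗ r₀ ⊗ ⋯ ⊗ rₙ₋₁)`. -/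
def cycAlg {V : Type} [AddCommGroup V] [Module k V] (n : ℕ)
    (f : (Tpow k R (n+1) : Type) →ₗ[k] V) : (Tpow k R (n+1) : Type) →ₗ[k] V :=
  f ∘ₗ rot k n

/-- the Hochschild coboundary `b = Σ_{i=0}^{n+1} (-1)^i δᵢ` of the standard (twisted)
cocyclic module of an algebra `(R, μ)`. -/
def bAlg {V : Type} [AddCommGroup V] [Module k V] (μ : R ⊗[k] R →ₗ[k] R) (n : ℕ)
    (f : (Tpow k R (n+1) : Type) →ₗ[k] V) : (Tpow k R (n+2) : Type) →ₗ[k] V :=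
  ∑ i ∈ Finset.range (n+2), ((-1 : ℤ)^i) • faceAlg k μ n i f

end SimplicialOps
section ModAlgSide
variable {H : Type} [Ring H] [HopfAlgebra k H]
variable {A M : Type} [AddCommGroup A] [Module k A] [AddCommGroup M] [Module k M]

/-- the diagonal left action of `H` on `Tpow k A n` induced by a left action `β` on `A`:
`h · (a₁ ⊗ ⋯ ⊗ aₙ) = h⁽¹⁾·a₁ ⊗ ⋯ ⊗ h⁽ⁿ⁾·aₙ`. -/
def actTpow (β : H ⊗[k] A →ₗ[k] A) :
    ∀ n : ℕ, H ⊗[k] (Tpow k A n : Type) →ₗ[k] (Tpow k A n : Type)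
  | 0 => (TensorProduct.lid k k).toLinearMap
      ∘ₗ ((Coalgebra.counit (R := k) (A := H)).rTensor k)
  | n+1 => (TensorProduct.map β (actTpow β n)) ∘ₗ mid4 k H H A (Tpow k A n : Type)
      ∘ₗ ((Coalgebra.comul (R := k) (A := H)).rTensor (A ⊗[k] (Tpow k A n : Type)))

/-- the left action of `H` on `M ⊗ A^{⊗(n+1)}` used to define the HKRS cocyclic module
of a module algebra: `h · (m ⊗ ã) = m · S(h⁽¹⁾) ⊗ h⁽²⁾ · ã`. -/
def actMA (β : H ⊗[k] A →ₗ[k] A) (act : M ⊗[k] H →ₗ[k] M) (n : ℕ) :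
    H ⊗[k] (M ⊗[k] (Tpow k A (n+1) : Type)) →ₗ[k] M ⊗[k] (Tpow k A (n+1) : Type) :=
  letI w : H ⊗[k] M →ₗ[k] M :=
    act ∘ₗ cmm k H M ∘ₗ ((HopfAlgebra.antipode (R := k)).rTensor M)
  (TensorProduct.map w (actTpow k β (n+1)))
    ∘ₗ mid4 k H H M (Tpow k A (n+1) : Type)
    ∘ₗ ((Coalgebra.comul (R := k) (A := H)).rTensor (M ⊗[k] (Tpow k A (n+1) : Type)))

/-- `φ : M ⊗ A^{⊗(n+1)} → k` is `H`-equivariant (i.e. `φ ∈ Hom_H(M ⊗ A^{⊗(n+1)}, k)`),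
with `k` the trivial `H`-module. -/
def IsInvariantMA (β : H ⊗[k] A →ₗ[k] A) (act : M ⊗[k] H →ₗ[k] M) (n : ℕ)
    (φ : (M ⊗[k] (Tpow k A (n+1) : Type)) →ₗ[k] k) : Prop :=
  φ ∘ₗ actMA k β act n
    = φ ∘ₗ (TensorProduct.lid k (M ⊗[k] (Tpow k A (n+1) : Type))).toLinearMap
        ∘ₗ ((Coalgebra.counit (R := k) (A := H)).rTensor
              (M ⊗[k] (Tpow k A (n+1) : Type)))

/-- the twisted rotation on `M ⊗ A^{⊗(n+1)}`:
`m ⊗ a₀ ⊗ ⋯ ⊗ aₙ ↦ m₍₀₎ ⊗ S⁻¹(m₍₋₁₎)·aₙ ⊗ a₀ ⊗ ⋯ ⊗ aₙ₋₁`. -/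
def rotMA (β : H ⊗[k] A →ₗ[k] A) (Sinv : H →ₗ[k] H) (ρM : M →ₗ[k] H ⊗[k] M) (n : ℕ) :
    M ⊗[k] (Tpow k A (n+1) : Type) →ₗ[k] M ⊗[k] (Tpow k A (n+1) : Type) :=
  (TensorProduct.leftComm k A M (Tpow k A n : Type)).toLinearMap
    ∘ₗ ((β ∘ₗ (Sinv.rTensor A)).rTensor (M ⊗[k] (Tpow k A n : Type)))
    ∘ₗ mid4 k H M A (Tpow k A n : Type)
    ∘ₗ ((rot k n).lTensor (H ⊗[k] M))
    ∘ₗ (ρM.rTensor (Tpow k A (n+1) : Type))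

/-- the cyclic operator of the HKRS cocyclic module `C^n_H(A, M) = Hom_H(M ⊗ A^{⊗(n+1)}, k)`:
`(τₙ φ)(m ⊗ a₀ ⊗ ⋯ ⊗ aₙ) = φ(m₍₀₎ ⊗ S⁻¹(m₍₋₁₎)·aₙ ⊗ a₀ ⊗ ⋯ ⊗ aₙ₋₁)`. -/
def cycMA (β : H ⊗[k] A →ₗ[k] A) (Sinv : H →ₗ[k] H) (ρM : M →ₗ[k] H ⊗[k] M) (n : ℕ)
    (φ : (M ⊗[k] (Tpow k A (n+1) : Type)) →ₗ[k] k) :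
    (M ⊗[k] (Tpow k A (n+1) : Type)) →ₗ[k] k :=
  φ ∘ₗ rotMA k β Sinv ρM n


/-- `M` is an `_A H`-SAYD coefficient module for the left `H`-module algebra `A` (in the
generalized sense): the cyclic operator of the HKRS cocyclic module
`C^n_H(A,M) = Hom_H(M ⊗ A^{⊗(n+1)}, k)` is well defined on equivariant cochains and
satisfies `τₙ^{n+1} = id`. -/
def IsMASAYD (β : H ⊗[k] A →ₗ[k] A) (Sinv : H →ₗ[k] H) (ρM : M →ₗ[k] H ⊗[k] M)
    (act : M ⊗[k] H →ₗ[k] M) : Prop :=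
  ∀ n : ℕ, ∀ φ : (M ⊗[k] (Tpow k A (n+1) : Type)) →ₗ[k] k,
    IsInvariantMA k β act n φ →
      IsInvariantMA k β act n (cycMA k β Sinv ρM n φ)
      ∧ (cycMA k β Sinv ρM n)^[n+1] φ = φ

end ModAlgSide

section ModAlgSideRing
variable {H : Type} [Ring H] [HopfAlgebra k H]
variable {A M : Type} [Ring A] [Algebra k A] [AddCommGroup M] [Module k M]

/-- the `i`-th coface of the HKRS cocyclic module `C^n_H(A, M)`; `i = n+1` is the twisted
last coface `(δ_{n+1} φ)(m ⊗ a₀ ⊗ ⋯ ⊗ a_{n+1}) = φ(m₍₀₎ ⊗ (S⁻¹(m₍₋₁₎)·a_{n+1}) a₀ ⊗ ⋯ ⊗ aₙ)`. -/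
def faceMA (β : H ⊗[k] A →ₗ[k] A) (Sinv : H →ₗ[k] H) (ρM : M →ₗ[k] H ⊗[k] M)
    (n i : ℕ) (φ : (M ⊗[k] (Tpow k A (n+1) : Type)) →ₗ[k] k) :
    (M ⊗[k] (Tpow k A (n+2) : Type)) →ₗ[k] k :=
  if i = n+1 then
    φ ∘ₗ ((merge k (LinearMap.mul' k A) n 0).lTensor M) ∘ₗ rotMA k β Sinv ρM (n+1)
  else φ ∘ₗ ((merge k (LinearMap.mul' k A) n i).lTensor M)

/-- the `i`-th codegeneracy of the HKRS cocyclic module `C^n_H(A, M)`. -/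
def degMA (n i : ℕ) (φ : (M ⊗[k] (Tpow k A (n+2) : Type)) →ₗ[k] k) :
    (M ⊗[k] (Tpow k A (n+1) : Type)) →ₗ[k] k :=
  φ ∘ₗ ((ins k (1 : A) n i).lTensor M)

/-- the Hochschild coboundary of the HKRS cocyclic module `C^n_H(A, M)`. -/
def bMA (β : H ⊗[k] A →ₗ[k] A) (Sinv : H →ₗ[k] H) (ρM : M →ₗ[k] H ⊗[k] M)
    (n : ℕ) (φ : (M ⊗[k] (Tpow k A (n+1) : Type)) →ₗ[k] k) :
    (M ⊗[k] (Tpow k A (n+2) : Type)) →ₗ[k] k :=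
  ∑ i ∈ Finset.range (n+2), ((-1 : ℤ)^i) • faceMA k β Sinv ρM n i φ

end ModAlgSideRing

section ComodAlgSide
variable {H : Type} [Ring H] [HopfAlgebra k H]
variable {B M : Type} [Ring B] [Algebra k B] [AddCommGroup M] [Module k M]

/-- the `i`-th coface of the cocyclic module `C^n_H(B, M) = Hom^H(B^{⊗(n+1)}, M)` of a left
`H`-comodule algebra `B`; `i = n+1` is the twisted last coface
`(δ_{n+1} f)(b₀ ⊗ ⋯ ⊗ b_{n+1}) = f(b_{n+1}₍₀₎ b₀ ⊗ b₁ ⊗ ⋯ ⊗ bₙ) · b_{n+1}₍₋₁₎`. -/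
def faceCB (ρB : B →ₗ[k] H ⊗[k] B) (act : M ⊗[k] H →ₗ[k] M) (n i : ℕ)
    (f : (Tpow k B (n+1) : Type) →ₗ[k] M) : (Tpow k B (n+2) : Type) →ₗ[k] M :=
  if i = n+1 then
    act ∘ₗ cmm k H M ∘ₗ ((f ∘ₗ merge k (LinearMap.mul' k B) n 0).lTensor H)
      ∘ₗ rotρL k ρB (n+1)
  else f ∘ₗ merge k (LinearMap.mul' k B) n i

/-- the `i`-th codegeneracy of `C^n_H(B, M)`. -/
def degCB (n i : ℕ) (f : (Tpow k B (n+2) : Type) →ₗ[k] M) :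
    (Tpow k B (n+1) : Type) →ₗ[k] M :=
  f ∘ₗ ins k (1 : B) n i

/-- the Hochschild coboundary of `C^n_H(B, M)`. -/
def bCB (ρB : B →ₗ[k] H ⊗[k] B) (act : M ⊗[k] H →ₗ[k] M) (n : ℕ)
    (f : (Tpow k B (n+1) : Type) →ₗ[k] M) : (Tpow k B (n+2) : Type) →ₗ[k] M :=
  ∑ i ∈ Finset.range (n+2), ((-1 : ℤ)^i) • faceCB k ρB act n i f

end ComodAlgSide
section PsiSec
variable {H : Type} [Ring H] [HopfAlgebra k H]
variable {A B M : Type} [AddCommGroup A] [Module k A] [AddCommGroup B] [Module k B]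
  [AddCommGroup M] [Module k M]

/-- the auxiliary "unzipping" map `(A ⊗ B)^{⊗ n} → H ⊗ (A^{⊗ n} ⊗ B^{⊗ n})` underlying the
cup-product map `Ψ`:
`(a₀ ⊗ b₀) ⊗ ⋯ ⊗ (aₙ ⊗ bₙ) ↦ b₀₍₋₁₎ ⋯ bₙ₍₋₁₎ ⊗
  ((S⁻¹(b₀₍₋₁₎ ⋯ bₙ₍₋₁₎)·a₀ ⊗ S⁻¹(b₁₍₋₁₎ ⋯ bₙ₍₋₁₎)·a₁ ⊗ ⋯) ⊗ (b₀₍₀₎ ⊗ ⋯ ⊗ bₙ₍₀₎))`. -/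
def Gmap (β : H ⊗[k] A →ₗ[k] A) (Sinv : H →ₗ[k] H) (ρB : B →ₗ[k] H ⊗[k] B) :
    ∀ n : ℕ, (Tpow k (A ⊗[k] B) n : Type) →ₗ[k]
      H ⊗[k] ((Tpow k A n : Type) ⊗[k] (Tpow k B n : Type))
  | 0 => (TensorProduct.mk k H (k ⊗[k] k) 1) ∘ₗ ((TensorProduct.mk k k k).flip 1)
  | n+1 =>
    letI TA : Type := (Tpow k A n : Type)
    letI TB : Type := (Tpow k B n : Type)
    letI inner : (H ⊗[k] (A ⊗[k] B)) ⊗[k] (H ⊗[k] (TA ⊗[k] TB)) →ₗ[k]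
        (A ⊗[k] TA) ⊗[k] (B ⊗[k] TB) :=
      (((β.rTensor TA) ∘ₗ ascs k H A TA).rTensor (B ⊗[k] TB))
        ∘ₗ ascs k H (A ⊗[k] TA) (B ⊗[k] TB)
        ∘ₗ ((mid4 k A B TA TB).lTensor H)
        ∘ₗ ((Sinv ∘ₗ LinearMap.mul' k H).rTensor ((A ⊗[k] B) ⊗[k] (TA ⊗[k] TB)))
        ∘ₗ mid4 k H (A ⊗[k] B) H (TA ⊗[k] TB)
    (inner.lTensor H)
      ∘ₗ ((LinearMap.mul' k H).rTensor
            ((H ⊗[k] (A ⊗[k] B)) ⊗[k] (H ⊗[k] (TA ⊗[k] TB))))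
      ∘ₗ mid4 k H (H ⊗[k] (A ⊗[k] B)) H (H ⊗[k] (TA ⊗[k] TB))
      ∘ₗ (TensorProduct.map
            (((TensorProduct.leftComm k A H B).toLinearMap.lTensor H)
              ∘ₗ (TensorProduct.leftComm k A H (H ⊗[k] B)).toLinearMap)
            (asc k H H (TA ⊗[k] TB)))
      ∘ₗ ((((Coalgebra.comul (R := k) (A := H)).rTensor (TA ⊗[k] TB)).lTensor
            (A ⊗[k] (H ⊗[k] (H ⊗[k] B)))))
      ∘ₗ ((((ρB.lTensor H ∘ₗ ρB).lTensor A)).rTensor (H ⊗[k] (TA ⊗[k] TB)))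
      ∘ₗ ((Gmap β Sinv ρB n).lTensor (A ⊗[k] B))

/-- the cup-product cochain map
`Ψ(φ ⊗ ψ)(a₀ ⋊ b₀ ⊗ ⋯ ⊗ aₙ ⋊ bₙ)
  = φ(ψ(b₀₍₀₎ ⊗ ⋯ ⊗ bₙ₍₀₎) ⊗ S⁻¹(b₀₍₋₁₎ ⋯ bₙ₍₋₁₎)·a₀ ⊗ ⋯ ⊗ S⁻¹(bₙ₍₋₁₎)·aₙ)`. -/
def Psi (β : H ⊗[k] A →ₗ[k] A) (Sinv : H →ₗ[k] H) (ρB : B →ₗ[k] H ⊗[k] B) (n : ℕ)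
    (φ : (M ⊗[k] (Tpow k A (n+1) : Type)) →ₗ[k] k)
    (ψ : (Tpow k B (n+1) : Type) →ₗ[k] M) :
    (Tpow k (A ⊗[k] B) (n+1) : Type) →ₗ[k] k :=
  φ ∘ₗ cmm k (Tpow k A (n+1) : Type) M
    ∘ₗ (ψ.lTensor (Tpow k A (n+1) : Type))
    ∘ₗ (TensorProduct.lid k ((Tpow k A (n+1) : Type) ⊗[k] (Tpow k B (n+1) : Type))).toLinearMap
    ∘ₗ ((Coalgebra.counit (R := k) (A := H)).rTensor
          ((Tpow k A (n+1) : Type) ⊗[k] (Tpow k B (n+1) : Type)))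
    ∘ₗ Gmap k β Sinv ρB (n+1)

end PsiSec

section Casts
variable {R : Type} [AddCommGroup R] [Module k R]

/-- transport along an equality of tensor-power indices. -/
def tcast (R : Type) [AddCommGroup R] [Module k R] {m n : ℕ} (e : m = n) :
    (Tpow k R m : Type) →ₗ[k] (Tpow k R n : Type) := by
  subst e; exact LinearMap.id

end Casts

section Iterates
variable {H : Type} [Ring H] [HopfAlgebra k H]

/-- iterated last coface on the HKRS complex `C^•_H(A,M)`, lifting a `p`-cochain to a
`(p+q)`-cochain (one factor of the Alexander--Whitney map). -/
def iterLastMA {A M : Type} [Ring A] [Algebra k A] [AddCommGroup M] [Module k M]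
    (β : H ⊗[k] A →ₗ[k] A) (Sinv : H →ₗ[k] H) (ρM : M →ₗ[k] H ⊗[k] M) (p : ℕ) :
    ∀ q : ℕ, ((M ⊗[k] (Tpow k A (p+1) : Type)) →ₗ[k] k) →
      ((M ⊗[k] (Tpow k A (p+q+1) : Type)) →ₗ[k] k)
  | 0, φ => φ
  | q+1, φ => faceMA k β Sinv ρM (p+q) (p+q+1) (iterLastMA β Sinv ρM p q φ)

/-- iterated zeroth coface on the complex `C^•_H(B,M)`, lifting a `q`-cochain to a
`(q+p)`-cochain (the other factor of the Alexander--Whitney map). -/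
def iterFace0CB {B M : Type} [Ring B] [Algebra k B] [AddCommGroup M] [Module k M]
    (ρB : B →ₗ[k] H ⊗[k] B) (act : M ⊗[k] H →ₗ[k] M) (q : ℕ) :
    ∀ p : ℕ, ((Tpow k B (q+1) : Type) →ₗ[k] M) → ((Tpow k B (q+p+1) : Type) →ₗ[k] M)
  | 0, ψ => ψ
  | p+1, ψ => faceCB k ρB act (q+p) 0 (iterFace0CB ρB act q p ψ)

/-- the cup product `⊔ = Ψ ∘ AW` of a `p`-cochain of `C^•_H(A,M)` and a `q`-cochain of
`C^•_H(B,M)`, a `(p+q)`-cochain of the cyclic complex of `A ⋊ B`. -/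
def cupAW {A B M : Type} [Ring A] [Algebra k A] [Ring B] [Algebra k B]
    [AddCommGroup M] [Module k M]
    (β : H ⊗[k] A →ₗ[k] A) (Sinv : H →ₗ[k] H) (ρB : B →ₗ[k] H ⊗[k] B)
    (ρM : M →ₗ[k] H ⊗[k] M) (act : M ⊗[k] H →ₗ[k] M) (p q : ℕ)
    (φ : (M ⊗[k] (Tpow k A (p+1) : Type)) →ₗ[k] k)
    (ψ : (Tpow k B (q+1) : Type) →ₗ[k] M) :
    (Tpow k (A ⊗[k] B) (p+q+1) : Type) →ₗ[k] k :=
  Psi k β Sinv ρB (p+q) (iterLastMA k β Sinv ρM p q φ)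
    ((iterFace0CB k ρB act q p ψ) ∘ₗ tcast k B (show p+q+1 = q+p+1 by omega))

end Iterates


section AuxConv
variable {k : Type} [Field k]
variable {C A' : Type} [AddCommGroup C] [Module k C] [Coalgebra k C] [Ring A'] [Algebra k A']

noncomputable def auxConv (f g : C →ₗ[k] A') : C →ₗ[k] A' :=
  LinearMap.mul' k A' ∘ₗ TensorProduct.map f g ∘ₗ Coalgebra.comul

lemma auxConv_repr (f g : C →ₗ[k] A') {c : C} (r : Coalgebra.Repr k c (C × C)) :
    auxConv f g c = ∑ i ∈ r.index, f (r.left i) * g (r.right i) := by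
  simp only [auxConv, LinearMap.coe_comp, Function.comp_apply, ← r.eq, map_sum,
    TensorProduct.map_tmul, LinearMap.mul'_apply]

noncomputable def auxConvOne : C →ₗ[k] A' := Algebra.linearMap k A' ∘ₗ Coalgebra.counit

lemma auxConv_one_right (f : C →ₗ[k] A') : auxConv f auxConvOne = f := by
  ext c
  obtain r := Coalgebra.Repr.arbitrary k c
  rw [auxConv_repr f auxConvOne r]
  have h1 : ∑ i ∈ r.index, (Coalgebra.counit (R := k) (r.right i)) • (r.left i) = c := by
    have h0 := congrArg (TensorProduct.rid k C) (Coalgebra.sum_tmul_counit_eq (R := k) r)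
    rw [map_sum] at h0
    simp only [TensorProduct.rid_tmul, one_smul] at h0
    exact h0
  have h2 := congrArg f h1
  rw [map_sum] at h2
  simp only [map_smul] at h2
  rw [← h2]
  refine Finset.sum_congr rfl fun i _ => ?_
  simp [auxConvOne, Algebra.smul_def, Algebra.commutes]

lemma auxConv_one_left (f : C →ₗ[k] A') : auxConv auxConvOne f = f := by
  ext c
  obtain r := Coalgebra.Repr.arbitrary k c
  rw [auxConv_repr auxConvOne f r]
  have h1 : ∑ i ∈ r.index, (Coalgebra.counit (R := k) (r.left i)) • (r.right i) = c := by
    have h0 := congrArg (TensorProduct.lid k C) (Coalgebra.sum_counit_tmul_eq (R := k) r)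
    rw [map_sum] at h0
    simp only [TensorProduct.lid_tmul, one_smul] at h0
    exact h0
  have h2 := congrArg f h1
  rw [map_sum] at h2
  simp only [map_smul] at h2
  rw [← h2]
  refine Finset.sum_congr rfl fun i _ => ?_
  simp [auxConvOne, Algebra.smul_def]

lemma auxConv_assoc (f g h : C →ₗ[k] A') : auxConv (auxConv f g) h = auxConv f (auxConv g h) := by
  have splitR : ∀ X : C ⊗[k] C →ₗ[k] A',
      TensorProduct.map (X ∘ₗ Coalgebra.comul) h
        = TensorProduct.map X h ∘ₗ (Coalgebra.comul (R := k) (A := C)).rTensor C := by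
    intro X; apply TensorProduct.ext'; intros x y; simp
  have splitL : ∀ X : C ⊗[k] C →ₗ[k] A',
      TensorProduct.map f (X ∘ₗ Coalgebra.comul)
        = TensorProduct.map f X ∘ₗ (Coalgebra.comul (R := k) (A := C)).lTensor C := by
    intro X; apply TensorProduct.ext'; intros x y; simp
  have key : LinearMap.mul' k A'
        ∘ₗ TensorProduct.map (LinearMap.mul' k A' ∘ₗ TensorProduct.map f g) h
      = (LinearMap.mul' k A'
          ∘ₗ TensorProduct.map f (LinearMap.mul' k A' ∘ₗ TensorProduct.map g h))
          ∘ₗ (TensorProduct.assoc k C C C).toLinearMap := by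
    apply TensorProduct.ext_threefold; intros x y z; simp [mul_assoc]
  ext c
  have econv1 : auxConv f g
      = (LinearMap.mul' k A' ∘ₗ TensorProduct.map f g) ∘ₗ Coalgebra.comul := rfl
  have econv2 : auxConv g h
      = (LinearMap.mul' k A' ∘ₗ TensorProduct.map g h) ∘ₗ Coalgebra.comul := rfl
  have e1 : auxConv (auxConv f g) h c
      = LinearMap.mul' k A' (TensorProduct.map (LinearMap.mul' k A' ∘ₗ TensorProduct.map f g) h
          ((Coalgebra.comul (R := k) (A := C)).rTensor C (Coalgebra.comul c))) := by
    have := congrArg (fun t => LinearMap.mul' k A' t)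
      (LinearMap.congr_fun (splitR (LinearMap.mul' k A' ∘ₗ TensorProduct.map f g))
        (Coalgebra.comul c))
    rw [← econv1] at this
    exact this
  have e2 : auxConv f (auxConv g h) c
      = LinearMap.mul' k A' (TensorProduct.map f (LinearMap.mul' k A' ∘ₗ TensorProduct.map g h)
          ((Coalgebra.comul (R := k) (A := C)).lTensor C (Coalgebra.comul c))) := by
    have := congrArg (fun t => LinearMap.mul' k A' t)
      (LinearMap.congr_fun (splitL (LinearMap.mul' k A' ∘ₗ TensorProduct.map g h))
        (Coalgebra.comul c))
    rw [← econv2] at this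
    exact this
  rw [e1, e2, ← Coalgebra.coassoc_apply]
  have := LinearMap.congr_fun key
    ((Coalgebra.comul (R := k) (A := C)).rTensor C (Coalgebra.comul c))
  simpa using this

end AuxConv

section AuxHopf
variable {k : Type} [Field k] {H : Type} [Ring H] [HopfAlgebra k H]

lemma aux_antipode_one : HopfAlgebra.antipode (R := k) (A := H) (1 : H) = 1 := by
  have := HopfAlgebra.mul_antipode_rTensor_comul_apply (R := k) (A := H) (1 : H)
  rw [Bialgebra.comul_one, Algebra.TensorProduct.one_def] at this
  simpa using this

lemma aux_comul_tmul_eq (a b : H) (ra : Coalgebra.Repr k a (H × H)) (rb : Coalgebra.Repr k b (H × H)) :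
    Coalgebra.comul (R := k) (a ⊗ₜ[k] b)
      = ∑ i ∈ ra.index, ∑ j ∈ rb.index,
          (ra.left i ⊗ₜ[k] rb.left j) ⊗ₜ[k] (ra.right i ⊗ₜ[k] rb.right j) := by
  rw [TensorProduct.comul_def]
  simp only [LinearMap.coe_comp, Function.comp_apply, TensorProduct.AlgebraTensorModule.map_tmul, ← ra.eq, ← rb.eq]
  simp [TensorProduct.sum_tmul, TensorProduct.tmul_sum, map_sum,
    TensorProduct.tensorTensorTensorComm_tmul]
  exact Finset.sum_comm

lemma aux_comul_mul_eq (a b : H) (ra : Coalgebra.Repr k a (H × H)) (rb : Coalgebra.Repr k b (H × H)) :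
    Coalgebra.comul (R := k) (a * b)
      = ∑ i ∈ ra.index, ∑ j ∈ rb.index,
          (ra.left i * rb.left j) ⊗ₜ[k] (ra.right i * rb.right j) := by
  rw [Bialgebra.comul_mul, ← ra.eq, ← rb.eq, Finset.sum_mul_sum]
  simp [Algebra.TensorProduct.tmul_mul_tmul]

lemma aux_convOne_tmul (a b : H) :
    (auxConvOne : H ⊗[k] H →ₗ[k] H) (a ⊗ₜ[k] b)
      = algebraMap k H (Coalgebra.counit (R := k) a * Coalgebra.counit (R := k) b) := by
  simp only [auxConvOne, LinearMap.coe_comp, Function.comp_apply,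
    TensorProduct.counit_def, TensorProduct.map_tmul, LinearMap.mul'_apply,
    Algebra.linearMap_apply, TensorProduct.AlgebraTensorModule.map_tmul,
    TensorProduct.AlgebraTensorModule.rid_tmul, smul_eq_mul, LinearEquiv.coe_coe, mul_comm]

lemma aux_antipode_mul (a b : H) :
    HopfAlgebra.antipode (R := k) (A := H) (a * b)
      = HopfAlgebra.antipode (R := k) (A := H) b * HopfAlgebra.antipode (R := k) (A := H) a := by
  set S := HopfAlgebra.antipode (R := k) (A := H) with hS
  set Mm : H ⊗[k] H →ₗ[k] H := LinearMap.mul' k H with hMm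
  set G : H ⊗[k] H →ₗ[k] H := S ∘ₗ LinearMap.mul' k H with hG
  set F : H ⊗[k] H →ₗ[k] H :=
    LinearMap.mul' k H ∘ₗ TensorProduct.map S S ∘ₗ (TensorProduct.comm k H H).toLinearMap with hF
  have hGM : auxConv G Mm = auxConvOne := by
    apply TensorProduct.ext'
    intro a b
    obtain ra := Coalgebra.Repr.arbitrary k a
    obtain rb := Coalgebra.Repr.arbitrary k b
    have lhs : auxConv G Mm (a ⊗ₜ[k] b)
        = ∑ i ∈ ra.index, ∑ j ∈ rb.index,
            S (ra.left i * rb.left j) * (ra.right i * rb.right j) := by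
      simp only [auxConv, LinearMap.coe_comp, Function.comp_apply]
      rw [aux_comul_tmul_eq a b ra rb]
      simp [G, Mm, map_sum]
    have hax := HopfAlgebra.mul_antipode_rTensor_comul_apply (R := k) (a * b)
    rw [aux_comul_mul_eq a b ra rb] at hax
    simp only [map_sum, LinearMap.rTensor_tmul, LinearMap.mul'_apply] at hax
    rw [lhs, hax, aux_convOne_tmul, Bialgebra.counit_mul]
  have hMF : auxConv Mm F = auxConvOne := by
    apply TensorProduct.ext'
    intro a b
    obtain ra := Coalgebra.Repr.arbitrary k a
    obtain rb := Coalgebra.Repr.arbitrary k b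
    have lhs : auxConv Mm F (a ⊗ₜ[k] b)
        = ∑ i ∈ ra.index, ∑ j ∈ rb.index,
            (ra.left i * rb.left j) * (S (rb.right j) * S (ra.right i)) := by
      simp only [auxConv, LinearMap.coe_comp, Function.comp_apply]
      rw [aux_comul_tmul_eq a b ra rb]
      simp [F, Mm, map_sum]
    rw [lhs]
    have inner : ∀ i ∈ ra.index,
        ∑ j ∈ rb.index, (ra.left i * rb.left j) * (S (rb.right j) * S (ra.right i))
          = Coalgebra.counit (R := k) b • (ra.left i * S (ra.right i)) := by
      intro i _
      have e1 : ∀ j ∈ rb.index,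
          (ra.left i * rb.left j) * (S (rb.right j) * S (ra.right i))
            = ra.left i * ((rb.left j * S (rb.right j)) * S (ra.right i)) := by
        intro j _; simp [mul_assoc]
      rw [Finset.sum_congr rfl e1, ← Finset.mul_sum, ← Finset.sum_mul,
        HopfAlgebra.sum_mul_antipode_eq_smul rb]
      simp [smul_mul_assoc, mul_smul_comm]
    rw [Finset.sum_congr rfl inner, ← Finset.smul_sum, HopfAlgebra.sum_mul_antipode_eq_smul ra,
      aux_convOne_tmul, smul_smul, mul_comm (Coalgebra.counit (R := k) b),
      Algebra.algebraMap_eq_smul_one (R := k) (A := H)]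
  have hGF : G = F := by
    calc G = auxConv G auxConvOne := (auxConv_one_right G).symm
      _ = auxConv G (auxConv Mm F) := by rw [hMF]
      _ = auxConv (auxConv G Mm) F := (auxConv_assoc G Mm F).symm
      _ = auxConv auxConvOne F := by rw [hGM]
      _ = F := auxConv_one_left F
  have := LinearMap.congr_fun hGF (a ⊗ₜ[k] b)
  simpa [G, F, Mm] using this

variable (δ : H →ₐ[k] k)

lemma aux_Sdelta_repr (h : H) (r : Coalgebra.Repr k h (H × H)) :
    Sdelta k δ h
      = ∑ i ∈ r.index, δ (r.left i) • HopfAlgebra.antipode (R := k) (A := H) (r.right i) := by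
  simp only [Sdelta, LinearMap.coe_comp, Function.comp_apply, LinearEquiv.coe_coe, ← r.eq,
    map_sum, TensorProduct.map_tmul, TensorProduct.lid_tmul, AlgHom.toLinearMap_apply]

lemma aux_Sdelta_one : Sdelta k δ (1 : H) = 1 := by
  simp only [Sdelta, LinearMap.coe_comp, Function.comp_apply, LinearEquiv.coe_coe,
    Bialgebra.comul_one, Algebra.TensorProduct.one_def, TensorProduct.map_tmul,
    TensorProduct.lid_tmul, AlgHom.toLinearMap_apply, map_one, aux_antipode_one, one_smul]

lemma aux_Sdelta_mul (a b : H) : Sdelta k δ (a * b) = Sdelta k δ b * Sdelta k δ a := by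
  obtain ra := Coalgebra.Repr.arbitrary k a
  obtain rb := Coalgebra.Repr.arbitrary k b
  have lhs : Sdelta k δ (a * b)
      = ∑ i ∈ ra.index, ∑ j ∈ rb.index, (δ (ra.left i) * δ (rb.left j)) •
          (HopfAlgebra.antipode (R := k) (A := H) (rb.right j)
            * HopfAlgebra.antipode (R := k) (A := H) (ra.right i)) := by
    simp only [Sdelta, LinearMap.coe_comp, Function.comp_apply, LinearEquiv.coe_coe]
    rw [aux_comul_mul_eq a b ra rb]
    simp only [map_sum, TensorProduct.map_tmul, TensorProduct.lid_tmul,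
      AlgHom.toLinearMap_apply, map_mul, aux_antipode_mul]
  rw [lhs, aux_Sdelta_repr δ a ra, aux_Sdelta_repr δ b rb, Finset.sum_mul_sum]
  rw [Finset.sum_comm]
  refine Finset.sum_congr rfl fun i _ => Finset.sum_congr rfl fun j _ => ?_
  simp only [smul_mul_assoc, mul_smul_comm, smul_smul]

lemma aux_conv_Sdelta_id :
    LinearMap.mul' k H ∘ₗ (Sdelta k δ).rTensor H ∘ₗ Coalgebra.comul
      = Algebra.linearMap k H ∘ₗ δ.toLinearMap := by
  have e0 : Sdelta k δ
      = auxConv (Algebra.linearMap k H ∘ₗ δ.toLinearMap)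
          (HopfAlgebra.antipode (R := k) (A := H)) := by
    ext h
    obtain r := Coalgebra.Repr.arbitrary k h
    rw [aux_Sdelta_repr δ h r, auxConv_repr _ _ r]
    refine Finset.sum_congr rfl fun i _ => ?_
    simp [Algebra.smul_def]
  have e1 : (LinearMap.mul' k H ∘ₗ (Sdelta k δ).rTensor H ∘ₗ Coalgebra.comul : H →ₗ[k] H)
      = auxConv (Sdelta k δ) LinearMap.id := rfl
  have e2 : auxConv (HopfAlgebra.antipode (R := k) (A := H)) (LinearMap.id : H →ₗ[k] H)
      = auxConvOne := by
    have : TensorProduct.map (HopfAlgebra.antipode (R := k) (A := H)) (LinearMap.id : H →ₗ[k] H)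
        = (HopfAlgebra.antipode (R := k) (A := H)).rTensor H := rfl
    rw [auxConv, this]
    exact HopfAlgebra.mul_antipode_rTensor_comul
  rw [e1, e0, auxConv_assoc, e2, auxConv_one_right]

end AuxHopf


section AuxMain
variable {k : Type} [Field k]

lemma aux_rT_assoc {X X' Y Z : Type} [AddCommGroup X] [Module k X] [AddCommGroup X']
    [Module k X'] [AddCommGroup Y] [Module k Y] [AddCommGroup Z] [Module k Z] (f : X →ₗ[k] X') :
    (f.rTensor (Y ⊗[k] Z)) ∘ₗ asc k X Y Z = asc k X' Y Z ∘ₗ ((f.rTensor Y).rTensor Z) := by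
  apply TensorProduct.ext_threefold
  intros x y z
  simp

lemma aux_factor {H A W M' : Type} [AddCommGroup H] [Module k H] [AddCommGroup A] [Module k A]
    [AddCommGroup W] [Module k W] [AddCommGroup M'] [Module k M']
    (x x' : H →ₗ[k] H) (ρA : A →ₗ[k] H ⊗[k] A) (φ : A ⊗[k] W →ₗ[k] M')
    (hx : x.rTensor A ∘ₗ ρA = x'.rTensor A ∘ₗ ρA) :
    (x.rTensor M') ∘ₗ (φ.lTensor H) ∘ₗ asc k H A W ∘ₗ (ρA.rTensor W)
      = (x'.rTensor M') ∘ₗ (φ.lTensor H) ∘ₗ asc k H A W ∘ₗ (ρA.rTensor W) := by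
  have key : ∀ (y : H →ₗ[k] H) (t : H ⊗[k] A) (w : W),
      (y.rTensor M') ((φ.lTensor H) ((asc k H A W) (t ⊗ₜ[k] w)))
        = (φ.lTensor H) ((asc k H A W) ((y.rTensor A t) ⊗ₜ[k] w)) := by
    intro y t w
    induction t using TensorProduct.induction_on with
    | zero => simp
    | add u v hu hv =>
      simp only [map_add, TensorProduct.add_tmul] at hu hv ⊢
      rw [hu, hv]
    | tmul h a => simp
  apply TensorProduct.ext'
  intro a w
  have hxa := LinearMap.congr_fun hx a
  simp only [LinearMap.coe_comp, Function.comp_apply] at hxa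
  simp only [LinearMap.coe_comp, Function.comp_apply, LinearMap.rTensor_tmul]
  rw [key x (ρA a) w, key x' (ρA a) w, hxa]

end AuxMain

set_option maxHeartbeats 1000000
set_option synthInstance.maxHeartbeats 1000000

/-- If `(δ, σ)` is a modular pair in `^A H`-involution for the left
`H`-comodule algebra `A`, then `^σ k_δ` is an `^A H`-SAYD module. -/
theorem stmt0 (k H A : Type) [Field k] [Ring H] [HopfAlgebra k H] [Ring A] [Algebra k A]
    (ρA : A →ₗ[k] H ⊗[k] A) (hA : IsComodAlgL k ρA)
    (δ : H →ₐ[k] k) (σ σ' : H) (hσ : IsGrouplike k σ)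
    (hinv : σ * σ' = 1) (hinv' : σ' * σ = 1)
    (hmodular : δ σ = 1)
    (hinvolution :
      ((LinearMap.mulLeft k σ' ∘ₗ LinearMap.mulRight k σ ∘ₗ Sdelta k δ ∘ₗ Sdelta k δ).rTensor A)
          ∘ₗ ρA = ρA) :
    IsAHSAYDL k ρA (coactGrouplike k σ) (actChar k δ) := by
  classical
  -- P1
  have P1 : (opMul k H (LinearMap.mul' k H) ∘ₗ TensorProduct.map (lmulBy k H (LinearMap.mul' k H) σ) (Sdelta k δ)) ∘ₗ (LinearMap.mulLeft k σ' ∘ₗ LinearMap.mulRight k σ ∘ₗ Sdelta k δ ∘ₗ Sdelta k δ).rTensor H = (rmulBy k H (LinearMap.mul' k H) σ ∘ₗ Sdelta k δ ∘ₗ LinearMap.mul' k H ∘ₗ (Sdelta k δ).rTensor H) := by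
    apply TensorProduct.ext'
    intro h₁ h₂
    simp only [LinearMap.coe_comp, Function.comp_apply, LinearMap.rTensor_tmul,
      TensorProduct.map_tmul, opMul, lmulBy, rmulBy, TensorProduct.comm_tmul,
      LinearMap.mul'_apply, TensorProduct.mk_apply, LinearMap.flip_apply,
      LinearMap.mulLeft_apply, LinearMap.mulRight_apply, LinearEquiv.coe_coe]
    rw [aux_Sdelta_mul δ, ← mul_assoc σ σ', hinv, one_mul, ← mul_assoc]
  -- P2
  have P2 : (rmulBy k H (LinearMap.mul' k H) σ ∘ₗ Sdelta k δ ∘ₗ LinearMap.mul' k H ∘ₗ (Sdelta k δ).rTensor H) ∘ₗ Coalgebra.comul = (δ.toLinearMap.smulRight σ) := by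
    apply LinearMap.ext
    intro h
    have hk := LinearMap.congr_fun (aux_conv_Sdelta_id δ) h
    simp only [LinearMap.coe_comp, Function.comp_apply] at hk ⊢
    rw [hk]
    simp only [Algebra.linearMap_apply, AlgHom.toLinearMap_apply,
      Algebra.algebraMap_eq_smul_one, map_smul, aux_Sdelta_one, rmulBy,
      LinearMap.coe_comp, Function.comp_apply, LinearMap.flip_apply,
      TensorProduct.mk_apply, LinearMap.mul'_apply, LinearMap.smulRight_apply,
      smul_mul_assoc, one_mul]
  -- C1 : insert the involution on the first comultiplied leg
  have C1 : (Coalgebra.comul (R := k) (A := H)).rTensor A ∘ₗ ρA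
      = ((((LinearMap.mulLeft k σ' ∘ₗ LinearMap.mulRight k σ ∘ₗ Sdelta k δ ∘ₗ Sdelta k δ).rTensor H) ∘ₗ Coalgebra.comul).rTensor A) ∘ₗ ρA := by
    apply LinearMap.ext
    intro a
    have h1 := LinearMap.congr_fun hA.1 a
    have h2 := LinearMap.congr_fun hinvolution a
    simp only [LinearMap.coe_comp, Function.comp_apply, LinearEquiv.coe_coe] at h1 h2 ⊢
    have comm1 : ∀ t : H ⊗[k] A, (ρA.lTensor H) (((LinearMap.mulLeft k σ' ∘ₗ LinearMap.mulRight k σ ∘ₗ Sdelta k δ ∘ₗ Sdelta k δ).rTensor A) t)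
        = ((LinearMap.mulLeft k σ' ∘ₗ LinearMap.mulRight k σ ∘ₗ Sdelta k δ ∘ₗ Sdelta k δ).rTensor (H ⊗[k] A)) ((ρA.lTensor H) t) := by
      intro t
      have e1 := LinearMap.congr_fun
        (LinearMap.lTensor_comp_rTensor
          (f := LinearMap.mulLeft k σ' ∘ₗ LinearMap.mulRight k σ ∘ₗ Sdelta k δ ∘ₗ Sdelta k δ)
          (g := ρA)) t
      have e2 := LinearMap.congr_fun
        (LinearMap.rTensor_comp_lTensor
          (f := LinearMap.mulLeft k σ' ∘ₗ LinearMap.mulRight k σ ∘ₗ Sdelta k δ ∘ₗ Sdelta k δ)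
          (g := ρA)) t
      simp only [LinearMap.coe_comp, Function.comp_apply] at e1 e2
      rw [e1, e2]
    have hnat := LinearMap.congr_fun
      (aux_rT_assoc (k := k) (Y := H) (Z := A) (LinearMap.mulLeft k σ' ∘ₗ LinearMap.mulRight k σ ∘ₗ Sdelta k δ ∘ₗ Sdelta k δ))
      (((Coalgebra.comul (R := k) (A := H)).rTensor A) (ρA a))
    simp only [LinearMap.coe_comp, Function.comp_apply, LinearEquiv.coe_coe] at hnat
    have chain : (TensorProduct.assoc k H H A)
          (((Coalgebra.comul (R := k) (A := H)).rTensor A) (ρA a))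
        = (TensorProduct.assoc k H H A)
            ((((LinearMap.mulLeft k σ' ∘ₗ LinearMap.mulRight k σ ∘ₗ Sdelta k δ ∘ₗ Sdelta k δ).rTensor H).rTensor A)
              (((Coalgebra.comul (R := k) (A := H)).rTensor A) (ρA a))) := by
      rw [← hnat, ← h1]
      conv_lhs => rw [← h2]
      rw [comm1, h1]
    have hinj := (TensorProduct.assoc k H H A).injective chain
    rw [hinj]
    have := LinearMap.congr_fun
      (LinearMap.rTensor_comp A (g := (LinearMap.mulLeft k σ' ∘ₗ LinearMap.mulRight k σ ∘ₗ Sdelta k δ ∘ₗ Sdelta k δ).rTensor H)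
        (f := (Coalgebra.comul (R := k) (A := H)))) (ρA a)
    simp only [LinearMap.coe_comp, Function.comp_apply] at this
    rw [this]
  -- star
  have star : (δ.toLinearMap.smulRight σ).rTensor A ∘ₗ ρA = ((opMul k H (LinearMap.mul' k H) ∘ₗ TensorProduct.map (lmulBy k H (LinearMap.mul' k H) σ) (Sdelta k δ)) ∘ₗ Coalgebra.comul).rTensor A ∘ₗ ρA := by
    apply LinearMap.ext
    intro a
    simp only [LinearMap.coe_comp, Function.comp_apply]
    have e1 := LinearMap.congr_fun
      (LinearMap.rTensor_comp A (g := (opMul k H (LinearMap.mul' k H) ∘ₗ TensorProduct.map (lmulBy k H (LinearMap.mul' k H) σ) (Sdelta k δ))) (f := (Coalgebra.comul (R := k) (A := H)))) (ρA a)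
    simp only [LinearMap.coe_comp, Function.comp_apply] at e1
    rw [e1]
    have hC := LinearMap.congr_fun C1 a
    simp only [LinearMap.coe_comp, Function.comp_apply] at hC
    rw [hC]
    have e2 := LinearMap.congr_fun
      (LinearMap.rTensor_comp A (g := (LinearMap.mulLeft k σ' ∘ₗ LinearMap.mulRight k σ ∘ₗ Sdelta k δ ∘ₗ Sdelta k δ).rTensor H)
        (f := (Coalgebra.comul (R := k) (A := H)))) (ρA a)
    simp only [LinearMap.coe_comp, Function.comp_apply] at e2
    rw [e2]
    have e3 := LinearMap.congr_fun
      ((LinearMap.rTensor_comp A (g := (opMul k H (LinearMap.mul' k H) ∘ₗ TensorProduct.map (lmulBy k H (LinearMap.mul' k H) σ) (Sdelta k δ))) (f := (LinearMap.mulLeft k σ' ∘ₗ LinearMap.mulRight k σ ∘ₗ Sdelta k δ ∘ₗ Sdelta k δ).rTensor H)).symm)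
      (((Coalgebra.comul (R := k) (A := H)).rTensor A) (ρA a))
    simp only [LinearMap.coe_comp, Function.comp_apply] at e3
    rw [e3, P1]
    have e4 := LinearMap.congr_fun
      ((LinearMap.rTensor_comp A (g := (rmulBy k H (LinearMap.mul' k H) σ ∘ₗ Sdelta k δ ∘ₗ LinearMap.mul' k H ∘ₗ (Sdelta k δ).rTensor H))
        (f := (Coalgebra.comul (R := k) (A := H)))).symm) (ρA a)
    simp only [LinearMap.coe_comp, Function.comp_apply] at e4
    rw [e4, P2]
  -- A1
  have A1 : (coactGrouplike k σ) ∘ₗ (actChar k δ) ∘ₗ cmm k H k = (δ.toLinearMap.smulRight σ).rTensor k := by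
    apply TensorProduct.ext'
    intro h c
    simp only [LinearMap.coe_comp, Function.comp_apply, LinearEquiv.coe_coe,
      TensorProduct.comm_tmul, actChar, coactGrouplike, LinearMap.lTensor_tmul,
      TensorProduct.lid_tmul, TensorProduct.mk_apply, LinearMap.rTensor_tmul,
      LinearMap.smulRight_apply, AlgHom.toLinearMap_apply]
    rw [TensorProduct.smul_tmul]
    simp [smul_eq_mul, mul_comm]
  -- B1 : evaluation of the Twist against the group-like coaction
  have B1 : Twist k (LinearMap.mul' k H) (Coalgebra.comul (R := k))
        (HopfAlgebra.antipode (R := k)) (actChar k δ)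
        ∘ₗ ((coactGrouplike k σ).lTensor H) = ((opMul k H (LinearMap.mul' k H) ∘ₗ TensorProduct.map (lmulBy k H (LinearMap.mul' k H) σ) (Sdelta k δ)) ∘ₗ Coalgebra.comul).rTensor k := by
    apply TensorProduct.ext'
    intro h c
    obtain r := Coalgebra.Repr.arbitrary k h
    have rr : ∀ i : r.ι, Coalgebra.Repr k (r.right i) (H × H) :=
      fun i => Coalgebra.Repr.arbitrary k (r.right i)
    have eD2 : ((Coalgebra.comul (R := k) (A := H)).lTensor H) (Coalgebra.comul h)
        = ∑ i ∈ r.index, r.left i ⊗ₜ[k]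
            (∑ j ∈ (rr i).index, (rr i).left j ⊗ₜ[k] (rr i).right j) := by
      rw [← r.eq, map_sum]
      simp only [LinearMap.lTensor_tmul]
      exact Finset.sum_congr rfl fun i _ => by rw [(rr i).eq]
    have lhs : Twist k (LinearMap.mul' k H) (Coalgebra.comul (R := k))
          (HopfAlgebra.antipode (R := k)) (actChar k δ) (h ⊗ₜ[k] (σ ⊗ₜ[k] c))
        = ∑ i ∈ r.index, ∑ j ∈ (rr i).index,
            (HopfAlgebra.antipode (R := k) (A := H) ((rr i).right j) * (σ * r.left i))
              ⊗ₜ[k] (c * δ ((rr i).left j)) := by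
      simp only [Twist, LinearMap.coe_comp, Function.comp_apply, LinearEquiv.coe_coe]
      rw [LinearMap.rTensor_tmul]
      simp only [LinearMap.coe_comp, Function.comp_apply]
      rw [eD2]
      simp only [TensorProduct.sum_tmul, TensorProduct.tmul_sum, map_sum,
        TensorProduct.tensorTensorTensorComm_tmul, LinearMap.rTensor_tmul,
        LinearMap.lTensor_tmul, TensorProduct.assoc_tmul, TensorProduct.assoc_symm_tmul,
        TensorProduct.comm_tmul, TensorProduct.lid_tmul, LinearMap.mul'_apply,
        TensorProduct.map_tmul, TensorProduct.mk_apply, AlgHom.toLinearMap_apply,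
        smul_eq_mul, opMul, actChar, LinearEquiv.coe_coe]
      simp only [LinearMap.coe_comp, Function.comp_apply, LinearEquiv.coe_coe,
        TensorProduct.comm_tmul, LinearMap.mul'_apply, LinearMap.rTensor_tmul,
        LinearMap.lTensor_tmul, TensorProduct.assoc_tmul, TensorProduct.assoc_symm_tmul,
        TensorProduct.lid_tmul, smul_eq_mul]
      refine Finset.sum_congr rfl fun i _ => Finset.sum_congr rfl fun j _ => ?_
      simp [AlgHom.toLinearMap_apply, smul_eq_mul, mul_comm]
    have rhs : opMul k H (LinearMap.mul' k H)
          (TensorProduct.map (lmulBy k H (LinearMap.mul' k H) σ) (Sdelta k δ)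
            (Coalgebra.comul (R := k) h))
        = ∑ i ∈ r.index, ∑ j ∈ (rr i).index,
            δ ((rr i).left j) • (HopfAlgebra.antipode (R := k) (A := H) ((rr i).right j)
              * (σ * r.left i)) := by
      rw [← r.eq, map_sum, map_sum]
      refine Finset.sum_congr rfl fun i _ => ?_
      simp only [TensorProduct.map_tmul, opMul, lmulBy, LinearMap.coe_comp,
        Function.comp_apply, TensorProduct.comm_tmul, LinearMap.mul'_apply,
        TensorProduct.mk_apply, LinearEquiv.coe_coe]
      rw [aux_Sdelta_repr δ (r.right i) (rr i), Finset.sum_mul]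
      exact Finset.sum_congr rfl fun j _ => smul_mul_assoc _ _ _
    simp only [LinearMap.coe_comp, Function.comp_apply, LinearMap.lTensor_tmul,
      coactGrouplike, TensorProduct.mk_apply, LinearMap.rTensor_tmul]
    rw [lhs, rhs]
    simp only [TensorProduct.sum_tmul, TensorProduct.smul_tmul]
    refine Finset.sum_congr rfl fun i _ => Finset.sum_congr rfl fun j _ => ?_
    simp [smul_eq_mul, mul_comm]
  -- assembling
  intro n φ hφ
  constructor
  · unfold AYDcondL
    apply LinearMap.ext
    intro t
    rw [LinearMap.lTensor_comp]
    have hfac := LinearMap.congr_fun (aux_factor (δ.toLinearMap.smulRight σ) ((opMul k H (LinearMap.mul' k H) ∘ₗ TensorProduct.map (lmulBy k H (LinearMap.mul' k H) σ) (Sdelta k δ)) ∘ₗ Coalgebra.comul) ρA φ star) t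
    simp only [LinearMap.coe_comp, Function.comp_apply, LinearEquiv.coe_coe] at hfac ⊢
    have hA1u := LinearMap.congr_fun A1
      (φ.lTensor H ((asc k H A _) ((ρA.rTensor _) t)))
    have hB1u := LinearMap.congr_fun B1
      (φ.lTensor H ((asc k H A _) ((ρA.rTensor _) t)))
    simp only [LinearMap.coe_comp, Function.comp_apply, LinearEquiv.coe_coe] at hA1u hB1u
    rw [hA1u, hB1u, hfac]
  · unfold StabCondL
    rw [← hφ]
    apply LinearMap.ext
    intro v
    simp only [LinearMap.coe_comp, Function.comp_apply, LinearEquiv.coe_coe, coactGrouplike,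
      TensorProduct.mk_apply, TensorProduct.comm_tmul, actChar, LinearMap.lTensor_tmul,
      TensorProduct.lid_tmul, AlgHom.toLinearMap_apply, hmodular, smul_eq_mul, mul_one,
      LinearMap.comp_apply]
    erw [LinearMap.comp_apply]
    simp [hmodular]

end HCN
end
end

section
/- Let H be a Hopf algebra over a field k and A a left H-comodule algebra. If H coacts on A commutatively, i.e. for every n, every ã ∈ A^⊗(n+1) and every g ∈ H one has ã₍₀₎ ⊗ ã₍₋₁₎g = ã₍₀₎ ⊗ gã₍₋₁₎ (with respect to the diagonal coaction), then any left H-comodule M, endowed with the trivial right H-action m·h = ε(h)m, is an ^A H-SAYD module. -/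
open TensorProduct LinearMap

noncomputable section
namespace HCN

variable (k : Type) [Field k]

section Stmt4Aux
variable {H : Type} [Ring H] [HopfAlgebra k H]

/-- `h ⊗ v ↦ ε(h) • v`. -/
def eps (V : Type) [AddCommGroup V] [Module k V] : H ⊗[k] V →ₗ[k] V :=
  (TensorProduct.lid k V).toLinearMap ∘ₗ (Coalgebra.counit (R := k) (A := H)).rTensor V

@[simp] lemma eps_tmul {V : Type} [AddCommGroup V] [Module k V] (h : H) (v : V) :
    eps k (V := V) (h ⊗ₜ[k] v) = (Coalgebra.counit (R := k) h) • v := by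
  simp [eps]

variable {V W : Type} [AddCommGroup V] [Module k V] [AddCommGroup W] [Module k W]
variable {M : Type} [AddCommGroup M] [Module k M]

lemma eps_natural (f : V →ₗ[k] W) (u : H ⊗[k] V) :
    eps k W ((f.lTensor H) u) = f (eps k V u) := by
  induction u using TensorProduct.induction_on with
  | zero => simp
  | tmul h v => simp
  | add x y hx hy => simp [map_add, hx, hy]

lemma trivAct_cmm (φ : V →ₗ[k] M) (u : H ⊗[k] V) :
    trivAct k H M (Coalgebra.counit (R := k)) (cmm k H M ((φ.lTensor H) u)) =
      φ (eps k V u) := by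
  induction u using TensorProduct.induction_on with
  | zero => simp
  | tmul h v => simp [trivAct]
  | add x y hx hy => simp only [map_add, hx, hy]

lemma eps_diag (u : H ⊗[k] V) (v : H ⊗[k] W) :
    eps k (V ⊗[k] W) ((LinearMap.mul' k H).rTensor (V ⊗[k] W) (mid4 k H V H W (u ⊗ₜ[k] v)))
      = (eps k V u) ⊗ₜ[k] (eps k W v) := by
  induction u using TensorProduct.induction_on with
  | zero => simp
  | add x y hx hy => simp only [add_tmul, map_add, hx, hy]
  | tmul g x =>
    induction v using TensorProduct.induction_on with
    | zero => simp
    | add x' y' hx hy =>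
      simp only [tmul_add, map_add, hx, hy]
    | tmul h y =>
      simp only [LinearEquiv.coe_coe, tensorTensorTensorComm_tmul, rTensor_tmul, mul'_apply,
        eps_tmul, Bialgebra.counit_mul, smul_tmul', tmul_smul, mul_smul]
      rw [smul_comm]
end Stmt4Aux
section Stmt4Aux2
variable {H : Type} [Ring H] [HopfAlgebra k H]
variable {A : Type} [AddCommGroup A] [Module k A]

lemma counital_Tpow (ρA : A →ₗ[k] H ⊗[k] A) (hcu : IsCounitalL k ρA) :
    ∀ (n : ℕ) (x : (Tpow k A n : Type)),
      eps k (Tpow k A n : Type) (TpowρL k (LinearMap.mul' k H) ρA n x) = x := by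
  have hcu' : ∀ a : A, eps k A (ρA a) = a := fun a => by
    simpa [eps] using LinearMap.congr_fun hcu a
  intro n
  induction n with
  | zero =>
    intro x
    show eps k _ (trivL k H k x) = x
    change eps k k ((1 : H) ⊗ₜ[k] (x : k)) = x
    exact (eps_tmul k (1 : H) (x : k)).trans (by rw [Bialgebra.counit_one, one_smul])
  | succ n ih =>
    intro x
    show eps k _ (diagL k (LinearMap.mul' k H) ρA (TpowρL k (LinearMap.mul' k H) ρA n) x) = x
    induction x using TensorProduct.induction_on with
    | zero => simp
    | add a b ha hb => simp only [map_add, ha, hb]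
    | tmul a w =>
      simp only [diagL, coe_comp, Function.comp_apply, map_tmul]
      rw [eps_diag, hcu', ih]

end Stmt4Aux2
section Stmt4Aux3
variable (H : Type) [Ring H] [HopfAlgebra k H]

/-- `(x ⊗ y) ⊗ g ↦ S(y) (g x)`. -/
def fS' : (H ⊗[k] H) ⊗[k] H →ₗ[k] H :=
  LinearMap.mul' k H ∘ₗ (HopfAlgebra.antipode (R := k) (A := H)).rTensor H ∘ₗ
    ((opMul k H (LinearMap.mul' k H)).lTensor H) ∘ₗ asc k H H H ∘ₗ ((cmm k H H).rTensor H)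

/-- `h ⊗ g ↦ S(h⁽²⁾) (g h⁽¹⁾)`. -/
def fS : H ⊗[k] H →ₗ[k] H :=
  fS' k H ∘ₗ (Coalgebra.comul (R := k) (A := H)).rTensor H

@[simp] lemma fS'_tmul (x y g : H) :
    fS' k H ((x ⊗ₜ[k] y) ⊗ₜ[k] g) =
      (HopfAlgebra.antipode (R := k) (A := H)) y * (g * x) := by
  simp [fS', opMul]

/-- `e(h) = S(h⁽¹⁾) h⁽²⁾-free form`: multiply antipode against comul, giving `ε(h) • 1`. -/
def nuS : H ⊗[k] H →ₗ[k] H :=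
  LinearMap.mul' k H ∘ₗ (HopfAlgebra.antipode (R := k) (A := H)).rTensor H

@[simp] lemma nuS_tmul (x y : H) :
    nuS k H (x ⊗ₜ[k] y) = (HopfAlgebra.antipode (R := k) (A := H)) x * y := by
  simp [nuS]

variable {H}
variable {V M : Type} [AddCommGroup V] [Module k V] [AddCommGroup M] [Module k M]
variable {A : Type} [AddCommGroup A] [Module k A]
variable {W : Type} [AddCommGroup W] [Module k W]

lemma one_mul_blob (z : H ⊗[k] V) :
    (LinearMap.mul' k H).rTensor V (ascs k H H V ((1 : H) ⊗ₜ[k] z)) = z := by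
  induction z using TensorProduct.induction_on with
  | zero => simp
  | tmul g v => simp
  | add x y hx hy => simp only [tmul_add, map_add, hx, hy]

lemma asc_blob (u : H ⊗[k] A) (w : W) :
    asc k H A W (u ⊗ₜ[k] w) = ((TensorProduct.mk k A W).flip w).lTensor H u := by
  induction u using TensorProduct.induction_on with
  | zero => simp [zero_tmul]
  | tmul h a => simp
  | add x y hx hy => simp only [add_tmul, map_add, hx, hy]

lemma counit_cancel (ρA : A →ₗ[k] H ⊗[k] A) (hcu : IsCounitalL k ρA) (v : H ⊗[k] A) :
    (eps k A).lTensor H ((ρA.lTensor H) v) = v := by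
  have hcu' : ∀ a : A, eps k A (ρA a) = a := fun a => by
    simpa [eps] using LinearMap.congr_fun hcu a
  induction v using TensorProduct.induction_on with
  | zero => simp
  | tmul h a => simp [hcu']
  | add x y hx hy => simp only [map_add, hx, hy]

lemma push_phi (φ : V →ₗ[k] M) (z : H ⊗[k] (H ⊗[k] V)) :
    (fS k H).rTensor M (ascs k H H M (((φ.lTensor H).lTensor H) z))
      = (φ.lTensor H) ((fS k H).rTensor V (ascs k H H V z)) := by
  induction z using TensorProduct.induction_on with
  | zero => simp
  | add x y hx hy => simp only [map_add, hx, hy]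
  | tmul x t =>
    induction t using TensorProduct.induction_on with
    | zero => simp
    | add s t hs ht => simp only [tmul_add, map_add, hs, ht]
    | tmul y v => simp

@[simp] lemma eps_comul (h : H) : eps k H (Coalgebra.comul (R := k) h) = h := by
  simp [eps]

/-- the inner part of `Twist` with the trivial action collapses via the counit. -/
lemma twist_inner (s : H ⊗[k] H) (m : M) :
    (rTensor M (HopfAlgebra.antipode (R := k) (A := H)))
      ((lTensor H (trivAct k H M (Coalgebra.counit (R := k)) ∘ₗ cmm k H M))
        ((TensorProduct.assoc k H H M) ((TensorProduct.comm k H H) s ⊗ₜ[k] m)))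
    = (HopfAlgebra.antipode (R := k) (A := H)) (eps k H s) ⊗ₜ[k] m := by
  induction s using TensorProduct.induction_on with
  | zero => simp
  | add x y hx hy => simp only [add_tmul, map_add, hx, hy, map_add, add_tmul]
  | tmul u v =>
    simp [trivAct, smul_tmul', tmul_smul]

set_option maxHeartbeats 1000000 in
set_option synthInstance.maxHeartbeats 200000 in
lemma TwistTriv (u : H ⊗[k] (H ⊗[k] M)) :
    Twist k (LinearMap.mul' k H) (Coalgebra.comul (R := k)) (HopfAlgebra.antipode (R := k))
      (trivAct k H M (Coalgebra.counit (R := k))) u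
      = (fS k H).rTensor M (ascs k H H M u) := by
  induction u using TensorProduct.induction_on with
  | zero => simp
  | add x y hx hy => simp only [map_add, hx, hy]
  | tmul h t =>
    induction t using TensorProduct.induction_on with
    | zero => simp
    | add s t hs ht => simp only [tmul_add, map_add, hs, ht]
    | tmul g m =>
      show _ = (fS k H).rTensor M (ascs k H H M (h ⊗ₜ (g ⊗ₜ m)))
      simp only [Twist, fS, coe_comp, Function.comp_apply, LinearEquiv.coe_coe,
        TensorProduct.assoc_symm_tmul, rTensor_tmul]
      -- now both sides have `Coalgebra.comul h` inside; generalize it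
      generalize Coalgebra.comul (R := k) h = t
      induction t using TensorProduct.induction_on with
      | zero => simp [zero_tmul]
      | add x y hx hy => simp only [add_tmul, map_add, hx, hy]
      | tmul x y =>
        simp only [lTensor_tmul, LinearEquiv.coe_coe, tensorTensorTensorComm_tmul,
          rTensor_tmul, opMul, coe_comp, Function.comp_apply, TensorProduct.comm_tmul,
          mul'_apply]
        rw [twist_inner k (Coalgebra.comul (R := k) y) m]
        simp

end Stmt4Aux3
section Stmt4Aux4
set_option maxHeartbeats 1000000
set_option synthInstance.maxHeartbeats 400000
variable {H : Type} [Ring H] [HopfAlgebra k H]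
variable {A : Type} [AddCommGroup A] [Module k A]
variable {W : Type} [AddCommGroup W] [Module k W]

/-- `h ⊗ a ↦ (h p) ⊗ (a ⊗ q)` for `P = p ⊗ q`. -/
def Gm (P : H ⊗[k] W) : H ⊗[k] A →ₗ[k] H ⊗[k] (A ⊗[k] W) :=
  (LinearMap.mul' k H).rTensor (A ⊗[k] W) ∘ₗ mid4 k H A H W ∘ₗ
    (TensorProduct.mk k (H ⊗[k] A) (H ⊗[k] W)).flip P

/-- `h ⊗ a ↦ (p h) ⊗ (a ⊗ q)` for `P = p ⊗ q`. -/
def Th2 (P : H ⊗[k] W) : H ⊗[k] A →ₗ[k] H ⊗[k] (A ⊗[k] W) :=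
  (LinearMap.mul' k H).rTensor (A ⊗[k] W) ∘ₗ ((cmm k H H).rTensor (A ⊗[k] W)) ∘ₗ
    mid4 k H A H W ∘ₗ (TensorProduct.mk k (H ⊗[k] A) (H ⊗[k] W)).flip P

lemma Gm_app (P : H ⊗[k] W) (u : H ⊗[k] A) :
    Gm k P u = (LinearMap.mul' k H).rTensor (A ⊗[k] W) (mid4 k H A H W (u ⊗ₜ[k] P)) := by
  simp [Gm]

lemma Th2_app (P : H ⊗[k] W) (u : H ⊗[k] A) :
    Th2 k P u = (LinearMap.mul' k H).rTensor (A ⊗[k] W)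
      (((cmm k H H).rTensor (A ⊗[k] W)) (mid4 k H A H W (u ⊗ₜ[k] P))) := by
  simp [Th2]

/-- the big intermediate map of the core computation. -/
def R1 (P : H ⊗[k] W) : H ⊗[k] ((H ⊗[k] H) ⊗[k] A) →ₗ[k] H ⊗[k] (A ⊗[k] W) :=
  (fS' k H).rTensor (A ⊗[k] W) ∘ₗ ascs k (H ⊗[k] H) H (A ⊗[k] W) ∘ₗ
    ((Gm k P : H ⊗[k] A →ₗ[k] H ⊗[k] (A ⊗[k] W)).lTensor (H ⊗[k] H)) ∘ₗ
    ascs k H H (H ⊗[k] A) ∘ₗ ((asc k H H A).lTensor H)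

lemma SL (P : H ⊗[k] W) (c : H) (f' : A) (t : H ⊗[k] H) :
    R1 k P (c ⊗ₜ[k] (t ⊗ₜ[k] f'))
      = (LinearMap.mul' k H).rTensor (A ⊗[k] W)
          (ascs k H H (A ⊗[k] W) ((nuS k H t) ⊗ₜ[k] (Th2 k P (c ⊗ₜ[k] f')))) := by
  induction t using TensorProduct.induction_on with
  | zero => simp only [zero_tmul, tmul_zero, map_zero]
  | add s t hs ht => simp only [add_tmul, tmul_add, map_add, hs, ht]
  | tmul x y =>
    simp only [R1, coe_comp, Function.comp_apply, LinearEquiv.coe_coe, lTensor_tmul,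
      TensorProduct.assoc_tmul, TensorProduct.assoc_symm_tmul]
    rw [Gm_app, Th2_app]
    induction P using TensorProduct.induction_on with
    | zero => simp
    | add P Q hP hQ =>
      simp only [tmul_add, map_add] at hP hQ ⊢
      rw [hP, hQ]
    | tmul p q =>
      simp [mul_assoc]

lemma c8 (P : H ⊗[k] W) (v : H ⊗[k] (H ⊗[k] A)) :
    R1 k P ((((Coalgebra.comul (R := k) (A := H)).rTensor A).lTensor H) v)
      = Th2 k P (((eps k A).lTensor H) v) := by
  induction v using TensorProduct.induction_on with
  | zero => simp only [map_zero]
  | add x y hx hy => simp only [map_add, hx, hy]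
  | tmul c t =>
    induction t using TensorProduct.induction_on with
    | zero => simp only [tmul_zero, map_zero]
    | add s t hs ht => simp only [tmul_add, map_add, hs, ht]
    | tmul y f' =>
      have hn : nuS k H (Coalgebra.comul (R := k) y)
          = (Coalgebra.counit (R := k) y) • (1 : H) := by
        simpa [nuS, Algebra.algebraMap_eq_smul_one] using
          HopfAlgebra.mul_antipode_rTensor_comul_apply (R := k) y
      simp only [lTensor_tmul, rTensor_tmul, eps_tmul]
      rw [SL k P c f' (Coalgebra.comul (R := k) y), hn, ← smul_tmul', map_smul, map_smul,
        one_mul_blob, tmul_smul, map_smul]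

lemma c9 (ρW : W →ₗ[k] H ⊗[k] W)
    (hW : ∀ g : H, ((LinearMap.mulRight k g).rTensor W) ∘ₗ ρW
        = ((LinearMap.mulLeft k g).rTensor W) ∘ₗ ρW)
    (w : W) (v : H ⊗[k] A) :
    Th2 k (ρW w) v
      = (LinearMap.mul' k H).rTensor (A ⊗[k] W) (mid4 k H A H W (v ⊗ₜ[k] ρW w)) := by
  induction v using TensorProduct.induction_on with
  | zero => simp only [Th2_app, zero_tmul, map_zero]
  | add x y hx hy => simp only [Th2_app, add_tmul, map_add] at hx hy ⊢; rw [hx, hy]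
  | tmul c d =>
    have h1 : ∀ t : H ⊗[k] W,
        (LinearMap.mul' k H).rTensor (A ⊗[k] W)
            (((cmm k H H).rTensor (A ⊗[k] W)) (mid4 k H A H W ((c ⊗ₜ[k] d) ⊗ₜ[k] t)))
          = ((TensorProduct.mk k A W d).lTensor H)
              (((LinearMap.mulRight k c).rTensor W) t) := by
      intro t
      induction t using TensorProduct.induction_on with
      | zero => simp only [tmul_zero, map_zero]
      | add x y hx hy => simp only [tmul_add, map_add, hx, hy]
      | tmul p q => simp
    have h2 : ∀ t : H ⊗[k] W,
        (LinearMap.mul' k H).rTensor (A ⊗[k] W) (mid4 k H A H W ((c ⊗ₜ[k] d) ⊗ₜ[k] t))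
          = ((TensorProduct.mk k A W d).lTensor H)
              (((LinearMap.mulLeft k c).rTensor W) t) := by
      intro t
      induction t using TensorProduct.induction_on with
      | zero => simp only [tmul_zero, map_zero]
      | add x y hx hy => simp only [tmul_add, map_add, hx, hy]
      | tmul p q => simp
    have h3 := LinearMap.congr_fun (hW c) w
    simp only [coe_comp, Function.comp_apply] at h3
    rw [Th2_app, h1, h3, ← h2]

lemma c3s {V : Type} [AddCommGroup V] [Module k V] (z : H ⊗[k] (H ⊗[k] V)) :
    ((Coalgebra.comul (R := k) (A := H)).rTensor H).rTensor V (ascs k H H V z)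
      = ascs k (H ⊗[k] H) H V
          (((Coalgebra.comul (R := k) (A := H)).rTensor (H ⊗[k] V)) z) := by
  induction z using TensorProduct.induction_on with
  | zero => simp only [map_zero]
  | add x y hx hy => simp only [map_add, hx, hy]
  | tmul h t =>
    induction t using TensorProduct.induction_on with
    | zero => simp only [tmul_zero, map_zero]
    | add s t hs ht => simp only [tmul_add, map_add, hs, ht]
    | tmul g v => simp

lemma c7s (ρA : A →ₗ[k] H ⊗[k] A) (z : H ⊗[k] (H ⊗[k] A)) :
    (ρA.lTensor (H ⊗[k] H)) (ascs k H H A z)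
      = ascs k H H (H ⊗[k] A) (((ρA.lTensor H).lTensor H) z) := by
  induction z using TensorProduct.induction_on with
  | zero => simp only [map_zero]
  | add x y hx hy => simp only [map_add, hx, hy]
  | tmul h t =>
    induction t using TensorProduct.induction_on with
    | zero => simp only [tmul_zero, map_zero]
    | add s t hs ht => simp only [tmul_add, map_add, hs, ht]
    | tmul g v => simp

end Stmt4Aux4
section Stmt4Aux5
set_option maxHeartbeats 1000000
set_option synthInstance.maxHeartbeats 400000
variable {H : Type} [Ring H] [HopfAlgebra k H]
variable {A : Type} [AddCommGroup A] [Module k A]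
variable {W : Type} [AddCommGroup W] [Module k W]

lemma core (ρA : A →ₗ[k] H ⊗[k] A) (hco : IsCoassocL k ρA) (hcu : IsCounitalL k ρA)
    (ρW : W →ₗ[k] H ⊗[k] W)
    (hW : ∀ g : H, ((LinearMap.mulRight k g).rTensor W) ∘ₗ ρW
        = ((LinearMap.mulLeft k g).rTensor W) ∘ₗ ρW)
    (a : A) (w : W) :
    (fS k H).rTensor (A ⊗[k] W)
      (ascs k H H (A ⊗[k] W)
        (((diagL k (LinearMap.mul' k H) ρA ρW ∘ₗ (TensorProduct.mk k A W).flip w).lTensor H)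
          (ρA a)))
      = diagL k (LinearMap.mul' k H) ρA ρW (a ⊗ₜ[k] w) := by
  have hc1 : diagL k (LinearMap.mul' k H) ρA ρW ∘ₗ (TensorProduct.mk k A W).flip w
      = Gm k (ρW w) ∘ₗ ρA := by
    apply LinearMap.ext; intro a'
    simp [diagL, Gm_app, Gm]
  rw [hc1, lTensor_comp, LinearMap.comp_apply]
  set X := ρA a with hX
  set X2 := (ρA.lTensor H) X with hX2
  -- expose the comultiplication inside fS
  have hfS : ∀ z : H ⊗[k] (H ⊗[k] (A ⊗[k] W)),
      (fS k H).rTensor (A ⊗[k] W) (ascs k H H (A ⊗[k] W) z)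
        = (fS' k H).rTensor (A ⊗[k] W)
            (ascs k (H ⊗[k] H) H (A ⊗[k] W)
              (((Coalgebra.comul (R := k) (A := H)).rTensor (H ⊗[k] (A ⊗[k] W))) z)) := by
    intro z
    rw [fS, rTensor_comp, LinearMap.comp_apply, c3s]
  rw [hfS]
  -- naturality: move the comultiplication past `Gm`
  have hc4 : ((Coalgebra.comul (R := k) (A := H)).rTensor (H ⊗[k] (A ⊗[k] W)))
        (((Gm k (ρW w) : H ⊗[k] A →ₗ[k] H ⊗[k] (A ⊗[k] W)).lTensor H) X2)
      = ((Gm k (ρW w) : H ⊗[k] A →ₗ[k] H ⊗[k] (A ⊗[k] W)).lTensor (H ⊗[k] H))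
          (((Coalgebra.comul (R := k) (A := H)).rTensor (H ⊗[k] A)) X2) := by
    have e := (rTensor_comp_lTensor (f := Coalgebra.comul (R := k) (A := H))
        (g := (Gm k (ρW w) : H ⊗[k] A →ₗ[k] H ⊗[k] (A ⊗[k] W)))).trans
      (lTensor_comp_rTensor (f := Coalgebra.comul (R := k) (A := H))
        (g := (Gm k (ρW w) : H ⊗[k] A →ₗ[k] H ⊗[k] (A ⊗[k] W)))).symm
    have h := LinearMap.congr_fun e X2
    simp only [coe_comp, Function.comp_apply] at h
    exact h
  rw [hc4]
  -- naturality: move the comultiplication past the inner coaction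
  have hc5 : ((Coalgebra.comul (R := k) (A := H)).rTensor (H ⊗[k] A)) X2
      = (ρA.lTensor (H ⊗[k] H))
          (((Coalgebra.comul (R := k) (A := H)).rTensor A) X) := by
    have e := (rTensor_comp_lTensor (f := Coalgebra.comul (R := k) (A := H)) (g := ρA)).trans
      (lTensor_comp_rTensor (f := Coalgebra.comul (R := k) (A := H)) (g := ρA)).symm
    have h := LinearMap.congr_fun e X
    simp only [coe_comp, Function.comp_apply] at h
    rw [hX2]
    exact h
  rw [hc5]
  -- coassociativity of the coaction, first use
  have hcoa := LinearMap.congr_fun hco a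
  simp only [coe_comp, Function.comp_apply] at hcoa
  have hc6 : ((Coalgebra.comul (R := k) (A := H)).rTensor A) X
      = ascs k H H A X2 := by
    rw [hX2, hX, hcoa]
    exact ((TensorProduct.assoc k H H A).symm_apply_apply _).symm
  rw [hc6, c7s]
  -- coassociativity, second use
  have hc7 : ((ρA.lTensor H).lTensor H) X2
      = ((asc k H H A).lTensor H)
          ((((Coalgebra.comul (R := k) (A := H)).rTensor A).lTensor H) X2) := by
    rw [hX2, ← LinearMap.comp_apply, ← lTensor_comp, hco, lTensor_comp, lTensor_comp,
      LinearMap.comp_apply, LinearMap.comp_apply]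
  rw [hc7]
  -- recognize `R1`
  have hR1 : (fS' k H).rTensor (A ⊗[k] W)
      (ascs k (H ⊗[k] H) H (A ⊗[k] W)
        (((Gm k (ρW w) : H ⊗[k] A →ₗ[k] H ⊗[k] (A ⊗[k] W)).lTensor (H ⊗[k] H))
          (ascs k H H (H ⊗[k] A)
            (((asc k H H A).lTensor H)
              ((((Coalgebra.comul (R := k) (A := H)).rTensor A).lTensor H) X2)))))
      = R1 k (ρW w) ((((Coalgebra.comul (R := k) (A := H)).rTensor A).lTensor H) X2) := by
    simp only [R1, coe_comp, Function.comp_apply]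
  rw [hR1, c8, counit_cancel k ρA hcu, c9 k ρW hW w]
  simp [diagL, hX]

lemma hcommW {A : Type} [Ring A] [Algebra k A] (ρA : A →ₗ[k] H ⊗[k] A)
    (hcomm : ∀ (n : ℕ) (g : H),
      ((LinearMap.mulRight k g).rTensor (Tpow k A (n+1) : Type))
          ∘ₗ TpowρL k (LinearMap.mul' k H) ρA (n+1)
        = ((LinearMap.mulLeft k g).rTensor (Tpow k A (n+1) : Type))
            ∘ₗ TpowρL k (LinearMap.mul' k H) ρA (n+1)) :
    ∀ (m : ℕ) (g : H),
      ((LinearMap.mulRight k g).rTensor (Tpow k A m : Type))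
          ∘ₗ TpowρL k (LinearMap.mul' k H) ρA m
        = ((LinearMap.mulLeft k g).rTensor (Tpow k A m : Type))
            ∘ₗ TpowρL k (LinearMap.mul' k H) ρA m
  | 0, g => by
    apply LinearMap.ext; intro x
    show ((LinearMap.mulRight k g).rTensor _) (trivL k H k x)
      = ((LinearMap.mulLeft k g).rTensor _) (trivL k H k x)
    change ((LinearMap.mulRight k g).rTensor k) ((1 : H) ⊗ₜ[k] (x : k))
      = ((LinearMap.mulLeft k g).rTensor k) ((1 : H) ⊗ₜ[k] (x : k))
    have key : ∀ y : k, ((LinearMap.mulRight k g).rTensor k) ((1 : H) ⊗ₜ[k] y)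
        = ((LinearMap.mulLeft k g).rTensor k) ((1 : H) ⊗ₜ[k] y) := by intro y; simp
    exact key x
  | (m+1), g => hcomm m g

end Stmt4Aux5
set_option maxHeartbeats 1000000 in
set_option synthInstance.maxHeartbeats 400000 in
/-- If `H` coacts commutatively on the left `H`-comodule algebra `A`
(diagonally on all tensor powers), then any left `H`-comodule `M` with the trivial right
action `m · h = ε(h) m` is an `^A H`-SAYD module. -/
theorem stmt4 (k H A M : Type) [Field k] [Ring H] [HopfAlgebra k H] [Ring A] [Algebra k A]
    [AddCommGroup M] [Module k M]
    (ρA : A →ₗ[k] H ⊗[k] A) (hA : IsComodAlgL k ρA)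
    (ρM : M →ₗ[k] H ⊗[k] M) (hM1 : IsCoassocL k ρM) (hM2 : IsCounitalL k ρM)
    (hcomm : ∀ (n : ℕ) (g : H),
      ((LinearMap.mulRight k g).rTensor (Tpow k A (n+1) : Type))
          ∘ₗ TpowρL k (LinearMap.mul' k H) ρA (n+1)
        = ((LinearMap.mulLeft k g).rTensor (Tpow k A (n+1) : Type))
            ∘ₗ TpowρL k (LinearMap.mul' k H) ρA (n+1)) :
    IsAHSAYDL k ρA ρM (trivAct k H M (Coalgebra.counit (R := k))) := by
  obtain ⟨hco, hcu, -, -⟩ := hA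
  have hcu' : ∀ a : A, eps k A (ρA a) = a := fun a => by
    simpa [eps] using LinearMap.congr_fun hcu a
  intro n φ hφ
  have hW := fun g => hcommW k ρA hcomm n g
  have hρ : TpowρL k (LinearMap.mul' k H) ρA (n+1)
      = diagL k (LinearMap.mul' k H) ρA (TpowρL k (LinearMap.mul' k H) ρA n) := rfl
  have hφ' : ∀ x, ρM (φ x)
      = (φ.lTensor H) (TpowρL k (LinearMap.mul' k H) ρA (n+1) x) := fun x => by
    exact LinearMap.congr_fun hφ x
  constructor
  · -- the AYD condition
    unfold AYDcondL
    apply TensorProduct.ext'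
    intro a w
    simp only [coe_comp, Function.comp_apply, rTensor_tmul]
    rw [asc_blob, trivAct_cmm, eps_natural, hcu', TwistTriv]
    rw [← LinearMap.comp_apply ((ρM ∘ₗ φ).lTensor H), ← lTensor_comp]
    have hφeq : ρM ∘ₗ φ = φ.lTensor H ∘ₗ TpowρL k (LinearMap.mul' k H) ρA (n+1) := hφ
    have hmerge : (ρM ∘ₗ φ) ∘ₗ (TensorProduct.mk k A (Tpow k A n : Type)).flip w
        = (φ.lTensor H) ∘ₗ
            (diagL k (LinearMap.mul' k H) ρA (TpowρL k (LinearMap.mul' k H) ρA n)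
              ∘ₗ (TensorProduct.mk k A (Tpow k A n : Type)).flip w) := by
      rw [hφeq, hρ]; rfl
    rw [hmerge, lTensor_comp, LinearMap.comp_apply,
      push_phi, core k ρA hco hcu (TpowρL k (LinearMap.mul' k H) ρA n) hW a w]
    simp only [LinearMap.flip_apply, TensorProduct.mk_apply]
    rw [hφ', hρ]
    rfl
  · -- the stability condition
    unfold StabCondL
    apply LinearMap.ext; intro x
    simp only [coe_comp, Function.comp_apply]
    exact (trivAct_cmm k φ (TpowρL k (LinearMap.mul' k H) ρA (n+1) x)).trans
      (congrArg φ (counital_Tpow k ρA hcu (n+1) x))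
end HCN
end
end
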